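/- arXiv:0802.1764 — 12 statements merged into one kernel-verified Lean document; each statement's English description precedes it below -/
import Mathlib

section
/- For every real number s and every positive integer x, ∑_{j=x+1}^{x²} (1/j^s) · ∑_{i=1}^{x} (1/i^s) · M_{⌊x²/(i·j)⌋}(s) = H_{x²}(s) − H_{x}(s). -/
open Finset ArithmeticFunction

lemma div_ne_zero' {n k : ℕ} (h : k ∣ n) (hn : n ≠ 0) : n / k ≠ 0 :=
  fun h0 => hn (by rw [← Nat.div_mul_cancel h, h0, zero_mul])

lemma swap_divisor_sum (n : ℕ) (f : ℕ → ℕ → ℤ) :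
    ∑ i ∈ n.divisors, ∑ k ∈ (n / i).divisors, f i k
      = ∑ k ∈ n.divisors, ∑ i ∈ (n / k).divisors, f i k := by
  rw [Finset.sum_sigma', Finset.sum_sigma']
  refine Finset.sum_nbij' (fun p => ⟨p.2, p.1⟩) (fun p => ⟨p.2, p.1⟩) ?_ ?_ ?_ ?_ ?_
  · rintro ⟨i, k⟩ hp
    simp only [Finset.mem_sigma, Nat.mem_divisors] at hp ⊢
    obtain ⟨⟨hi, hn⟩, hk, -⟩ := hp
    have hkn : k ∣ n := hk.trans (Nat.div_dvd_of_dvd hi)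
    refine ⟨⟨hkn, hn⟩, ?_, div_ne_zero' hkn hn⟩
    rw [Nat.dvd_div_iff_mul_dvd hkn, mul_comm]
    exact (Nat.dvd_div_iff_mul_dvd hi).mp hk
  · rintro ⟨k, i⟩ hp
    simp only [Finset.mem_sigma, Nat.mem_divisors] at hp ⊢
    obtain ⟨⟨hk, hn⟩, hi, -⟩ := hp
    have hin : i ∣ n := hi.trans (Nat.div_dvd_of_dvd hk)
    refine ⟨⟨hin, hn⟩, ?_, div_ne_zero' hin hn⟩
    rw [Nat.dvd_div_iff_mul_dvd hin, mul_comm]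
    exact (Nat.dvd_div_iff_mul_dvd hk).mp hi
  · rintro ⟨i, k⟩ _; rfl
  · rintro ⟨k, i⟩ _; rfl
  · rintro ⟨i, k⟩ _; rfl

lemma sum_moebius_divisors (m : ℕ) :
    ∑ k ∈ m.divisors, (moebius k : ℤ) = if m = 1 then 1 else 0 := by
  rw [← coe_mul_zeta_apply, moebius_mul_coe_zeta, one_apply]

lemma key (x n : ℕ) (h1 : x < n) (h2 : n ≤ x ^ 2) :
    (∑ i ∈ n.divisors.filter (· ≤ x),
      ∑ p ∈ ((n / i).divisorsAntidiagonal.filter fun p => x < p.1), (moebius p.2 : ℤ)) = 1 := by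
  have hn : n ≠ 0 := by omega
  rw [Finset.sum_filter]
  have e1 : ∀ i ∈ n.divisors,
      (if i ≤ x then
        ∑ p ∈ ((n / i).divisorsAntidiagonal.filter fun p => x < p.1), (moebius p.2 : ℤ) else 0)
      = ∑ k ∈ (n / i).divisors, (if i ≤ x ∧ x < n / (i * k) then (moebius k : ℤ) else 0) := by
    intro i _
    have hAD : (∑ p ∈ ((n / i).divisorsAntidiagonal.filter fun p => x < p.1), (moebius p.2 : ℤ))
        = ∑ k ∈ (n / i).divisors, (if x < n / (i * k) then (moebius k : ℤ) else 0) := by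
      rw [Finset.sum_filter,
        Nat.sum_divisorsAntidiagonal' (f := fun a b => if x < a then (moebius b : ℤ) else 0)]
      exact Finset.sum_congr rfl fun k _ => by rw [Nat.div_div_eq_div_mul]
    split_ifs with h
    · rw [hAD]; exact Finset.sum_congr rfl fun k _ => by simp [h]
    · symm
      refine Finset.sum_eq_zero fun k _ => ?_
      simp [h]
  rw [Finset.sum_congr rfl e1, swap_divisor_sum]
  have e2 : ∀ k ∈ n.divisors, ∀ i ∈ (n / k).divisors,
      (if i ≤ x ∧ x < n / (i * k) then (moebius k : ℤ) else 0)
      = (if x < (n / k) / i then (moebius k : ℤ) else 0) := by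
    intro k hk i hi
    rw [Nat.mem_divisors] at hk hi
    have hik : n / (i * k) = (n / k) / i := by
      rw [Nat.div_div_eq_div_mul, mul_comm]
    rw [hik]
    congr 1
    have : x < (n / k) / i → i ≤ x := by
      intro hlt
      by_contra hgt
      push_neg at hgt
      have hdvd : i ∣ n / k := hi.1
      have hmul : i * ((n / k) / i) = n / k := Nat.mul_div_cancel' hdvd
      have : (x + 1) * (x + 1) ≤ i * ((n / k) / i) :=
        Nat.mul_le_mul hgt hlt
      have hle : n / k ≤ n := Nat.div_le_self n k
      nlinarith [hmul]
    simp only [eq_iff_iff, and_iff_right_iff_imp]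
    exact this
  rw [Finset.sum_congr rfl (fun k hk => Finset.sum_congr rfl (e2 k hk))]
  have e3 : ∀ k ∈ n.divisors,
      (∑ i ∈ (n / k).divisors, if x < (n / k) / i then (moebius k : ℤ) else 0)
      = ∑ j ∈ (n / k).divisors, (if x < j then (moebius k : ℤ) else 0) :=
    fun k _ => Nat.sum_div_divisors (n / k) (fun j => if x < j then (moebius k : ℤ) else 0)
  rw [Finset.sum_congr rfl e3, swap_divisor_sum n (fun k j => if x < j then (moebius k : ℤ) else 0)]
  have e4 : ∀ j ∈ n.divisors,
      (∑ k ∈ (n / j).divisors, if x < j then (moebius k : ℤ) else 0)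
      = (if j = n then 1 else 0) := by
    intro j hj
    rw [Nat.mem_divisors] at hj
    by_cases hxj : x < j
    · simp only [if_pos hxj, sum_moebius_divisors]
      congr 1
      simp only [eq_iff_iff]
      constructor
      · intro h; rw [← Nat.mul_div_cancel' hj.1, h, mul_one]
      · intro h; rw [h, Nat.div_self (Nat.pos_of_ne_zero hn)]
    · have hjn : j ≠ n := by omega
      rw [if_neg hjn]
      exact Finset.sum_eq_zero fun k _ => if_neg hxj
  rw [Finset.sum_congr rfl e4, Finset.sum_ite_eq' n.divisors n (fun _ => (1:ℤ))]
  rw [if_pos (Nat.mem_divisors_self n hn)]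


/-- Generalized oscillatory number in power `s`: `M_n(s) = ∑_{k=1}^{n} μ(k)/k^s`. -/
noncomputable def Mgen (s : ℝ) (n : ℕ) : ℝ :=
  ∑ k ∈ Finset.Icc 1 n, (moebius k : ℝ) / (k : ℝ) ^ s

/-- Generalized harmonic number in power `s`: `H_n(s) = ∑_{k=1}^{n} 1/k^s`. -/
noncomputable def Hgen (s : ℝ) (n : ℕ) : ℝ :=
  ∑ k ∈ Finset.Icc 1 n, 1 / (k : ℝ) ^ s

theorem stmt_2 (s : ℝ) (x : ℕ) (hx : 0 < x) :
    ∑ j ∈ Finset.Icc (x + 1) (x ^ 2), (1 / (j : ℝ) ^ s) *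
      ∑ i ∈ Finset.Icc 1 x, (1 / (i : ℝ) ^ s) * Mgen s (x ^ 2 / (i * j)) =
    Hgen s (x ^ 2) - Hgen s x := by
  have hxx : x ≤ x ^ 2 := Nat.le_self_pow (by norm_num) x
  have hR : Hgen s (x ^ 2) - Hgen s x = ∑ n ∈ Finset.Icc (x + 1) (x ^ 2), 1 / (n : ℝ) ^ s := by
    unfold Hgen
    have h0 : ∀ m : ℕ, Finset.Icc 1 m = Finset.Ioc 0 m := fun m => Finset.Icc_add_one_left_eq_Ioc 0 m
    have h1 : Finset.Icc (x + 1) (x ^ 2) = Finset.Ioc x (x ^ 2) := Finset.Icc_add_one_left_eq_Ioc x (x ^ 2)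
    rw [h0, h0, h1, ← Finset.sum_Ioc_consecutive (fun n : ℕ => 1 / (n : ℝ) ^ s)
      (Nat.zero_le x) hxx]
    ring
  rw [hR]
  calc
    ∑ j ∈ Finset.Icc (x + 1) (x ^ 2), (1 / (j : ℝ) ^ s) *
        ∑ i ∈ Finset.Icc 1 x, (1 / (i : ℝ) ^ s) * Mgen s (x ^ 2 / (i * j))
      = ∑ j ∈ Finset.Icc (x + 1) (x ^ 2), ∑ i ∈ Finset.Icc 1 x,
          ∑ k ∈ Finset.Icc 1 (x ^ 2 / (i * j)),
            (moebius k : ℝ) / ((i * j * k : ℕ) : ℝ) ^ s := by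
        refine Finset.sum_congr rfl fun j hj => ?_
        rw [Finset.mul_sum]
        refine Finset.sum_congr rfl fun i hi => ?_
        unfold Mgen
        rw [Finset.mul_sum, Finset.mul_sum]
        refine Finset.sum_congr rfl fun k hk => ?_
        simp only [Finset.mem_Icc] at hj hi hk
        have hip : (0:ℝ) < (i:ℝ) := by exact_mod_cast Nat.lt_of_lt_of_le Nat.zero_lt_one hi.1
        have hjp : (0:ℝ) < (j:ℝ) := by
          have : 0 < j := by omega
          exact_mod_cast this
        have hkp : (0:ℝ) < (k:ℝ) := by exact_mod_cast Nat.lt_of_lt_of_le Nat.zero_lt_one hk.1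
        have his : (0:ℝ) < (i:ℝ) ^ s := Real.rpow_pos_of_pos hip s
        have hjs : (0:ℝ) < (j:ℝ) ^ s := Real.rpow_pos_of_pos hjp s
        have hks : (0:ℝ) < (k:ℝ) ^ s := Real.rpow_pos_of_pos hkp s
        push_cast
        rw [Real.mul_rpow (by positivity) (by positivity),
          Real.mul_rpow (by positivity) (by positivity)]
        rw [div_mul_div_comm, div_mul_div_comm, one_mul, one_mul]
        congr 1
        ring
    _ = ∑ q ∈ (Finset.Icc (x + 1) (x ^ 2)).sigma
          (fun j => (Finset.Icc 1 x).sigma fun i => Finset.Icc 1 (x ^ 2 / (i * j))),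
          (moebius q.2.2 : ℝ) / ((q.2.1 * q.1 * q.2.2 : ℕ) : ℝ) ^ s := by
        rw [Finset.sum_sigma]
        refine Finset.sum_congr rfl fun j hj => ?_
        rw [Finset.sum_sigma]
    _ = ∑ q ∈ (Finset.Icc (x + 1) (x ^ 2)).sigma
          (fun n => (n.divisors.filter (· ≤ x)).sigma
            fun i => (n / i).divisorsAntidiagonal.filter fun p => x < p.1),
          (moebius q.2.2.2 : ℝ) / ((q.1 : ℕ) : ℝ) ^ s := by
        refine Finset.sum_nbij'
          (fun q => ⟨q.2.1 * q.1 * q.2.2, q.2.1, (q.1, q.2.2)⟩)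
          (fun q => ⟨q.2.2.1, q.2.1, q.2.2.2⟩) ?_ ?_ ?_ ?_ ?_
        · rintro ⟨j, i, k⟩ hq
          simp only [Finset.mem_sigma, Finset.mem_Icc] at hq
          obtain ⟨⟨hj1, hj2⟩, ⟨hi1, hi2⟩, hk1, hk2⟩ := hq
          have hip : 0 < i := hi1
          have hjp : 0 < j := by omega
          have hkp : 0 < k := hk1
          have hij : 0 < i * j := Nat.mul_pos hip hjp
          have hn2 : i * j * k ≤ x ^ 2 := by
            have h := (Nat.le_div_iff_mul_le hij).mp hk2
            calc i * j * k = k * (i * j) := by ring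
              _ ≤ x ^ 2 := h
          have hn1 : x + 1 ≤ i * j * k := by
            refine le_trans hj1 (Nat.le_of_dvd (by positivity) ⟨i * k, by ring⟩)
          have hnn : i * j * k ≠ 0 := by positivity
          have hdiv : (i * j * k) / i = j * k := by
            rw [show i * j * k = i * (j * k) by ring, Nat.mul_div_cancel_left _ hip]
          simp only [Finset.mem_sigma, Finset.mem_Icc, Finset.mem_filter, Nat.mem_divisors,
            Nat.mem_divisorsAntidiagonal]
          refine ⟨⟨hn1, hn2⟩, ⟨⟨⟨j * k, by ring⟩, hnn⟩, hi2⟩, ⟨?_, ?_⟩, by omega⟩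
          · simpa [hdiv]
          · rw [hdiv]; positivity
        · rintro ⟨n, i, j, k⟩ hq
          simp only [Finset.mem_sigma, Finset.mem_Icc, Finset.mem_filter, Nat.mem_divisors,
            Nat.mem_divisorsAntidiagonal] at hq
          obtain ⟨⟨hn1, hn2⟩, ⟨⟨hidvd, hnn⟩, hix⟩, ⟨hjk, hni⟩, hxj⟩ := hq
          have hip : 0 < i := Nat.pos_of_dvd_of_pos hidvd (Nat.pos_of_ne_zero hnn)
          have hkp : 0 < k := by
            rcases Nat.eq_zero_or_pos k with h | h
            · exfalso; apply hni; rw [← hjk, h, mul_zero]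
            · exact h
          have hjdvd : j ∣ n := dvd_trans ⟨k, hjk.symm⟩ (Nat.div_dvd_of_dvd hidvd)
          have hjle : j ≤ x ^ 2 :=
            le_trans (Nat.le_of_dvd (Nat.pos_of_ne_zero hnn) hjdvd) hn2
          have hijn : i * (j * k) = n := by
            rw [hjk, Nat.mul_div_cancel' hidvd]
          simp only [Finset.mem_sigma, Finset.mem_Icc]
          refine ⟨⟨by omega, hjle⟩, ⟨hip, hix⟩, hkp, ?_⟩
          rw [Nat.le_div_iff_mul_le (Nat.mul_pos hip (by omega))]
          calc k * (i * j) = i * (j * k) := by ring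
            _ = n := hijn
            _ ≤ x ^ 2 := hn2
        · rintro ⟨j, i, k⟩ _; rfl
        · rintro ⟨n, i, j, k⟩ hq
          simp only [Finset.mem_sigma, Finset.mem_Icc, Finset.mem_filter, Nat.mem_divisors,
            Nat.mem_divisorsAntidiagonal] at hq
          obtain ⟨⟨hn1, hn2⟩, ⟨⟨hidvd, hnn⟩, hix⟩, ⟨hjk, hni⟩, hxj⟩ := hq
          have hijn : i * j * k = n := by
            rw [mul_assoc, hjk, Nat.mul_div_cancel' hidvd]
          show (⟨i * j * k, i, (j, k)⟩ : Σ _ : ℕ, Σ _ : ℕ, ℕ × ℕ) = ⟨n, i, (j, k)⟩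
          rw [hijn]
        · rintro ⟨j, i, k⟩ _; rfl
    _ = ∑ n ∈ Finset.Icc (x + 1) (x ^ 2), ∑ i ∈ n.divisors.filter (· ≤ x),
          ∑ p ∈ (n / i).divisorsAntidiagonal.filter (fun p => x < p.1),
            (moebius p.2 : ℝ) / (n : ℝ) ^ s := by
        rw [Finset.sum_sigma]
        refine Finset.sum_congr rfl fun n hn => ?_
        rw [Finset.sum_sigma]
    _ = ∑ n ∈ Finset.Icc (x + 1) (x ^ 2), 1 / (n : ℝ) ^ s := by
        refine Finset.sum_congr rfl fun n hn => ?_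
        simp only [Finset.mem_Icc] at hn
        have hkey := key x n (by omega) hn.2
        have hcast : ∑ i ∈ n.divisors.filter (· ≤ x),
              ∑ p ∈ (n / i).divisorsAntidiagonal.filter (fun p => x < p.1),
                (moebius p.2 : ℝ) / (n : ℝ) ^ s
            = ((∑ i ∈ n.divisors.filter (· ≤ x),
              ∑ p ∈ (n / i).divisorsAntidiagonal.filter (fun p => x < p.1),
                (moebius p.2 : ℤ) : ℤ) : ℝ) / (n : ℝ) ^ s := by
          push_cast
          rw [Finset.sum_div]
          exact Finset.sum_congr rfl fun i _ => by rw [Finset.sum_div]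
        rw [hcast, hkey]
        norm_num
end

section
/- For every real number s and every positive integer x, ∑_{i=1}^{x} (1/i^s) · ∑_{j=x+1}^{x²} (1/j^s) · M_{⌊x²/(i·j)⌋}(s) = H_{x}(s) − ∑_{i=1}^{x} ∑_{j=1}^{x} (1/(i·j)^s) · M_{⌊x²/(i·j)⌋}(s). -/
open Finset ArithmeticFunction

lemma Mgen_zero (s : ℝ) : Mgen s 0 = 0 := by simp [Mgen]

lemma key_sum (s : ℝ) (N : ℕ) (hN : 1 ≤ N) :
    ∑ j ∈ Finset.Icc 1 N, (1 / (j : ℝ) ^ s) * Mgen s (N / j) = 1 := by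
  have h1 : ∑ j ∈ Finset.Icc 1 N, (1 / (j : ℝ) ^ s) * Mgen s (N / j)
      = ∑ p ∈ (Finset.Icc 1 N).sigma (fun j => Finset.Icc 1 (N / j)),
          (moebius p.2 : ℝ) / ((p.1 * p.2 : ℕ) : ℝ) ^ s := by
    rw [Finset.sum_sigma]
    refine Finset.sum_congr rfl fun j hj => ?_
    rw [Mgen, Finset.mul_sum]
    refine Finset.sum_congr rfl fun k hk => ?_
    have hj0 : (0:ℝ) ≤ j := Nat.cast_nonneg j
    have hk0 : (0:ℝ) ≤ k := Nat.cast_nonneg k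
    push_cast
    rw [Real.mul_rpow hj0 hk0]
    ring
  have h2 : ∑ p ∈ (Finset.Icc 1 N).sigma (fun j => Finset.Icc 1 (N / j)),
        (moebius p.2 : ℝ) / ((p.1 * p.2 : ℕ) : ℝ) ^ s
      = ∑ p ∈ (Finset.Icc 1 N).sigma (fun n => n.divisors),
          (moebius p.2 : ℝ) / ((p.1 : ℕ) : ℝ) ^ s := by
    refine Finset.sum_nbij'
      (fun p : (_ : ℕ) × ℕ => (⟨p.1 * p.2, p.2⟩ : (_ : ℕ) × ℕ))
      (fun p : (_ : ℕ) × ℕ => (⟨p.1 / p.2, p.2⟩ : (_ : ℕ) × ℕ))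
      ?_ ?_ ?_ ?_ ?_
    · rintro ⟨j, k⟩ hp
      simp only [Finset.mem_sigma, Finset.mem_Icc] at hp
      obtain ⟨⟨hj1, hjN⟩, hk1, hkd⟩ := hp
      have hj0 : 0 < j := hj1
      have hjk : j * k ≤ N := by
        rw [mul_comm]
        exact (Nat.le_div_iff_mul_le hj0).mp hkd
      simp only [Finset.mem_sigma, Finset.mem_Icc, Nat.mem_divisors]
      refine ⟨⟨Nat.one_le_iff_ne_zero.mpr (by positivity), hjk⟩, Dvd.intro_left j rfl, ?_⟩
      positivity
    · rintro ⟨n, d⟩ hp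
      simp only [Finset.mem_sigma, Finset.mem_Icc, Nat.mem_divisors] at hp
      obtain ⟨⟨hn1, hnN⟩, hd, hn0⟩ := hp
      have hd0 : 0 < d := Nat.pos_of_dvd_of_pos hd (Nat.pos_of_ne_zero hn0)
      have hq0 : 0 < n / d := Nat.div_pos (Nat.le_of_dvd (Nat.pos_of_ne_zero hn0) hd) hd0
      simp only [Finset.mem_sigma, Finset.mem_Icc]
      refine ⟨⟨hq0, le_trans (Nat.div_le_self n d) hnN⟩, hd0, ?_⟩
      rw [Nat.le_div_iff_mul_le hq0]
      calc d * (n / d) = n := Nat.mul_div_cancel' hd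
        _ ≤ N := hnN
    · rintro ⟨j, k⟩ hp
      simp only [Finset.mem_sigma, Finset.mem_Icc] at hp
      have hk0 : 0 < k := hp.2.1
      have hjk : j * k / k = j := by
        rw [Nat.mul_div_assoc j dvd_rfl, Nat.div_self hk0, mul_one]
      simp [hjk]
    · rintro ⟨n, d⟩ hp
      simp only [Finset.mem_sigma, Finset.mem_Icc, Nat.mem_divisors] at hp
      simp [Nat.div_mul_cancel hp.2.1]
    · rintro ⟨j, k⟩ _
      rfl
  have h3 : ∑ p ∈ (Finset.Icc 1 N).sigma (fun n => n.divisors),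
        (moebius p.2 : ℝ) / ((p.1 : ℕ) : ℝ) ^ s = 1 := by
    rw [Finset.sum_sigma]
    have : ∀ n ∈ Finset.Icc 1 N,
        (∑ d ∈ n.divisors, (moebius d : ℝ) / (n : ℝ) ^ s)
          = if n = 1 then 1 else 0 := by
      intro n hn
      rw [← Finset.sum_div]
      have hsum : (∑ d ∈ n.divisors, (moebius d : ℤ)) = if n = 1 then 1 else 0 := by
        have h := congrArg (fun f : ArithmeticFunction ℤ => f n) moebius_mul_coe_zeta
        simp only [coe_mul_zeta_apply, one_apply] at h
        exact h
      have hR : (∑ d ∈ n.divisors, (moebius d : ℝ)) = if n = 1 then 1 else 0 := by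
        rw [show (∑ d ∈ n.divisors, ((moebius d : ℤ) : ℝ))
            = ((∑ d ∈ n.divisors, moebius d : ℤ) : ℝ) by push_cast; rfl, hsum]
        split_ifs <;> simp
      rw [hR]
      rcases eq_or_ne n 1 with h | h
      · simp [h]
      · simp [h]
    rw [Finset.sum_congr rfl this, Finset.sum_ite_eq' (Finset.Icc 1 N) 1 (fun _ => (1:ℝ))]
    simp [hN]
  rw [h1, h2, h3]

theorem stmt_3 (s : ℝ) (x : ℕ) (hx : 0 < x) :
    ∑ i ∈ Finset.Icc 1 x, (1 / (i : ℝ) ^ s) *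
      ∑ j ∈ Finset.Icc (x + 1) (x ^ 2), (1 / (j : ℝ) ^ s) * Mgen s (x ^ 2 / (i * j)) =
    Hgen s x -
      ∑ i ∈ Finset.Icc 1 x, ∑ j ∈ Finset.Icc 1 x,
        (1 / ((i : ℝ) * (j : ℝ)) ^ s) * Mgen s (x ^ 2 / (i * j)) := by
  have hxx : x ≤ x ^ 2 := by nlinarith
  -- split Icc 1 x² = Icc 1 x ∪ Icc (x+1) x²
  have hsplit : ∀ i : ℕ,
      ∑ j ∈ Finset.Icc 1 (x ^ 2), (1 / (j : ℝ) ^ s) * Mgen s (x ^ 2 / (i * j))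
        = ∑ j ∈ Finset.Icc 1 x, (1 / (j : ℝ) ^ s) * Mgen s (x ^ 2 / (i * j))
        + ∑ j ∈ Finset.Icc (x + 1) (x ^ 2), (1 / (j : ℝ) ^ s) * Mgen s (x ^ 2 / (i * j)) := by
    intro i
    rw [← Finset.Ico_add_one_right_eq_Icc, ← Finset.Ico_add_one_right_eq_Icc, ← Finset.Ico_add_one_right_eq_Icc,
      ← Finset.sum_Ico_consecutive _ (by omega : 1 ≤ x + 1) (by omega : x + 1 ≤ x ^ 2 + 1)]
  -- the key evaluation for i ≤ x
  have hkey : ∀ i ∈ Finset.Icc 1 x,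
      ∑ j ∈ Finset.Icc 1 (x ^ 2), (1 / (j : ℝ) ^ s) * Mgen s (x ^ 2 / (i * j)) = 1 := by
    intro i hi
    simp only [Finset.mem_Icc] at hi
    have hi0 : 0 < i := hi.1
    have hN1 : 1 ≤ x ^ 2 / i := by
      rw [Nat.le_div_iff_mul_le hi0]
      calc 1 * i = i := one_mul i
        _ ≤ x ^ 2 := le_trans hi.2 hxx
    have hdd : ∀ j : ℕ, x ^ 2 / (i * j) = (x ^ 2 / i) / j := fun j =>
      (Nat.div_div_eq_div_mul _ _ _).symm
    simp only [hdd]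
    conv_rhs => rw [← key_sum s (x ^ 2 / i) hN1]
    symm
    refine Finset.sum_subset (Finset.Icc_subset_Icc le_rfl (Nat.div_le_self _ _)) ?_
    intro j hj hj'
    simp only [Finset.mem_Icc] at hj hj'
    have hlt : x ^ 2 / i < j := by omega
    rw [Nat.div_eq_of_lt hlt, Mgen_zero, mul_zero]
  -- rewrite the RHS double sum summand
  have hRHS : ∀ i ∈ Finset.Icc 1 x, ∀ j ∈ Finset.Icc 1 x,
      (1 / ((i : ℝ) * (j : ℝ)) ^ s) = (1 / (i : ℝ) ^ s) * (1 / (j : ℝ) ^ s) := by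
    intro i _ j _
    rw [Real.mul_rpow (Nat.cast_nonneg i) (Nat.cast_nonneg j)]
    rw [one_div, one_div, one_div, mul_inv]
  calc ∑ i ∈ Finset.Icc 1 x, (1 / (i : ℝ) ^ s) *
        ∑ j ∈ Finset.Icc (x + 1) (x ^ 2), (1 / (j : ℝ) ^ s) * Mgen s (x ^ 2 / (i * j))
      = ∑ i ∈ Finset.Icc 1 x, ((1 / (i : ℝ) ^ s) *
          (∑ j ∈ Finset.Icc 1 (x ^ 2), (1 / (j : ℝ) ^ s) * Mgen s (x ^ 2 / (i * j)))
        - (1 / (i : ℝ) ^ s) *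
          ∑ j ∈ Finset.Icc 1 x, (1 / (j : ℝ) ^ s) * Mgen s (x ^ 2 / (i * j))) := by
        refine Finset.sum_congr rfl fun i _ => ?_
        rw [hsplit i]; ring
    _ = ∑ i ∈ Finset.Icc 1 x, (1 / (i : ℝ) ^ s)
        - ∑ i ∈ Finset.Icc 1 x, ∑ j ∈ Finset.Icc 1 x,
            (1 / ((i : ℝ) * (j : ℝ)) ^ s) * Mgen s (x ^ 2 / (i * j)) := by
        rw [Finset.sum_sub_distrib]
        congr 1
        · refine Finset.sum_congr rfl fun i hi => ?_
          rw [hkey i hi, mul_one]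
        · refine Finset.sum_congr rfl fun i hi => ?_
          rw [Finset.mul_sum]
          refine Finset.sum_congr rfl fun j hj => ?_
          rw [hRHS i hi j hj]; ring
    _ = Hgen s x - ∑ i ∈ Finset.Icc 1 x, ∑ j ∈ Finset.Icc 1 x,
            (1 / ((i : ℝ) * (j : ℝ)) ^ s) * Mgen s (x ^ 2 / (i * j)) := by
        rw [Hgen]
end

section
/- For every real number s and every positive integer x, H_{x²}(s) = 2·H_{x}(s) − ∑_{i=1}^{x} ∑_{j=1}^{x} (1/(i·j)^s) · M_{⌊x²/(i·j)⌋}(s). -/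
open Finset ArithmeticFunction

lemma biUnion_antidiag (N : ℕ) :
    (Finset.Icc 1 N).biUnion (fun n => n.divisorsAntidiagonal)
      = ((Finset.Icc 1 N) ×ˢ (Finset.Icc 1 N)).filter (fun p => p.1 * p.2 ≤ N) := by
  ext ⟨a, b⟩
  simp only [mem_biUnion, Nat.mem_divisorsAntidiagonal, mem_Icc, mem_filter, mem_product]
  constructor
  · rintro ⟨n, ⟨h1, h2⟩, hab, hn0⟩
    subst hab
    have ha : 1 ≤ a := Nat.one_le_iff_ne_zero.2 (by rintro rfl; simp at h1)
    have hb : 1 ≤ b := Nat.one_le_iff_ne_zero.2 (by rintro rfl; simp at h1)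
    have hA : a ≤ a * b := Nat.le_mul_of_pos_right a (by omega)
    have hB : b ≤ a * b := Nat.le_mul_of_pos_left b (by omega)
    exact ⟨⟨⟨ha, le_trans hA h2⟩, ⟨hb, le_trans hB h2⟩⟩, h2⟩
  · rintro ⟨⟨⟨ha, _⟩, ⟨hb, _⟩⟩, hab⟩
    exact ⟨a * b, ⟨Nat.one_le_iff_ne_zero.2 (Nat.mul_ne_zero (by omega) (by omega)), hab⟩, rfl,
      Nat.mul_ne_zero (by omega) (by omega)⟩

lemma pair_reindex (N : ℕ) (f : ℕ → ℕ → ℝ) :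
    ∑ m ∈ Finset.Icc 1 N, ∑ k ∈ Finset.Icc 1 (N / m), f m k
      = ∑ n ∈ Finset.Icc 1 N, ∑ p ∈ n.divisorsAntidiagonal, f p.1 p.2 := by
  have hdisj : ∀ n₁ ∈ Finset.Icc 1 N, ∀ n₂ ∈ Finset.Icc 1 N, n₁ ≠ n₂ →
      Disjoint n₁.divisorsAntidiagonal n₂.divisorsAntidiagonal := by
    intro n₁ _ n₂ _ hne
    rw [Finset.disjoint_left]
    rintro ⟨a, b⟩ h1 h2
    rw [Nat.mem_divisorsAntidiagonal] at h1 h2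
    exact hne (h1.1.symm.trans h2.1)
  rw [← Finset.sum_biUnion hdisj, biUnion_antidiag, Finset.sum_filter]
  rw [Finset.sum_product]
  apply Finset.sum_congr rfl
  intro m hm
  rw [mem_Icc] at hm
  rw [← Finset.sum_filter]
  congr 1
  ext k
  simp only [mem_filter, mem_Icc]
  constructor
  · rintro ⟨hk1, hk2⟩
    have : m * k ≤ N := by
      rw [mul_comm]
      exact (Nat.le_div_iff_mul_le (by omega : 0 < m)).1 hk2
    refine ⟨⟨hk1, le_trans (Nat.le_mul_of_pos_left k (by omega)) this⟩, this⟩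
  · rintro ⟨⟨hk1, _⟩, hmk⟩
    exact ⟨hk1, (Nat.le_div_iff_mul_le (by omega : 0 < m)).2 (by rw [mul_comm]; exact hmk)⟩

lemma key_s4 (s : ℝ) {N : ℕ} (hN : 1 ≤ N) :
    ∑ m ∈ Finset.Icc 1 N, (1 / (m : ℝ) ^ s) * Mgen s (N / m) = 1 := by
  have h1 : ∀ m ∈ Finset.Icc 1 N, (1 / (m : ℝ) ^ s) * Mgen s (N / m)
      = ∑ k ∈ Finset.Icc 1 (N / m), (ArithmeticFunction.moebius k : ℝ) / ((m * k : ℕ) : ℝ) ^ s := by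
    intro m hm
    rw [mem_Icc] at hm
    rw [Mgen, Finset.mul_sum]
    refine Finset.sum_congr rfl fun k hk => ?_
    rw [mem_Icc] at hk
    push_cast
    rw [Real.mul_rpow (by positivity) (by positivity)]
    ring
  rw [Finset.sum_congr rfl h1,
    pair_reindex N (fun m k => (ArithmeticFunction.moebius k : ℝ) / ((m * k : ℕ) : ℝ) ^ s)]
  have h2 : ∀ n ∈ Finset.Icc 1 N,
      (∑ p ∈ n.divisorsAntidiagonal,
        (ArithmeticFunction.moebius p.2 : ℝ) / ((p.1 * p.2 : ℕ) : ℝ) ^ s)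
      = if n = 1 then (1 : ℝ) else 0 := by
    intro n hn
    rw [mem_Icc] at hn
    have hc : ∀ p ∈ n.divisorsAntidiagonal,
        (ArithmeticFunction.moebius p.2 : ℝ) / ((p.1 * p.2 : ℕ) : ℝ) ^ s
        = (ArithmeticFunction.moebius p.2 : ℝ) / ((n : ℕ) : ℝ) ^ s := by
      intro p hp
      rw [Nat.mem_divisorsAntidiagonal] at hp
      rw [hp.1]
    rw [Finset.sum_congr rfl hc, ← Finset.sum_div]
    have hmuZ : (∑ d ∈ n.divisors, ArithmeticFunction.moebius d) = if n = 1 then 1 else 0 := by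
      have h0 : (ArithmeticFunction.moebius * ↑ArithmeticFunction.zeta : ArithmeticFunction ℤ) n
          = (1 : ArithmeticFunction ℤ) n := by
        rw [ArithmeticFunction.moebius_mul_coe_zeta]
      rwa [ArithmeticFunction.coe_mul_zeta_apply, ArithmeticFunction.one_apply] at h0
    have hmu : (∑ p ∈ n.divisorsAntidiagonal, (ArithmeticFunction.moebius p.2 : ℝ))
        = if n = 1 then (1 : ℝ) else 0 := by
      rw [Nat.sum_divisorsAntidiagonal' (f := fun _ b => (ArithmeticFunction.moebius b : ℝ))]
      rw [← Int.cast_sum, hmuZ]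
      split_ifs <;> simp
    rw [hmu]
    split_ifs with h
    · subst h; simp [Real.one_rpow]
    · simp
  rw [Finset.sum_congr rfl h2, Finset.sum_ite_eq' (Finset.Icc 1 N) 1 (fun _ => (1 : ℝ))]
  simp [hN]

lemma sum_split (f : ℕ → ℝ) {a b : ℕ} (h : a ≤ b) :
    ∑ k ∈ Finset.Icc 1 b, f k = ∑ k ∈ Finset.Icc 1 a, f k + ∑ k ∈ Finset.Ioc a b, f k := by
  have h0 : ∀ n : ℕ, Finset.Icc 1 n = Finset.Ioc 0 n := by
    intro n; ext k; simp [Finset.mem_Icc, Finset.mem_Ioc]; omega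
  rw [h0, h0, Finset.sum_Ioc_consecutive f (Nat.zero_le a) h]

theorem stmt_4 (s : ℝ) (x : ℕ) (hx : 0 < x) :
    Hgen s (x ^ 2) = 2 * Hgen s x -
      ∑ i ∈ Finset.Icc 1 x, ∑ j ∈ Finset.Icc 1 x,
        (1 / ((i : ℝ) * (j : ℝ)) ^ s) * Mgen s (x ^ 2 / (i * j)) := by
  have hxx : x ≤ x ^ 2 := by nlinarith
  set g : ℕ → ℕ → ℝ := fun i j => (1 / (i : ℝ) ^ s) * ((1 / (j : ℝ) ^ s) * Mgen s (x ^ 2 / (i * j)))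
    with hg
  -- step 1
  have step1 : ∑ i ∈ Finset.Icc 1 x, ∑ j ∈ Finset.Icc 1 (x ^ 2 / i), g i j = Hgen s x := by
    rw [Hgen]
    refine Finset.sum_congr rfl fun i hi => ?_
    rw [mem_Icc] at hi
    have hNi : 1 ≤ x ^ 2 / i := (Nat.one_le_div_iff (by omega)).2 (le_trans hi.2 hxx)
    simp only [hg]
    rw [← Finset.mul_sum]
    have hinner : ∑ j ∈ Finset.Icc 1 (x ^ 2 / i), (1 / (j : ℝ) ^ s) * Mgen s (x ^ 2 / (i * j))
        = ∑ m ∈ Finset.Icc 1 (x ^ 2 / i), (1 / (m : ℝ) ^ s) * Mgen s (x ^ 2 / i / m) :=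
      Finset.sum_congr rfl fun j _ => by rw [Nat.div_div_eq_div_mul]
    rw [hinner, key_s4 s hNi, mul_one]
  -- split inner interval
  have step2 : ∀ i ∈ Finset.Icc 1 x,
      ∑ j ∈ Finset.Icc 1 (x ^ 2 / i), g i j
        = ∑ j ∈ Finset.Icc 1 x, g i j + ∑ j ∈ Finset.Ioc x (x ^ 2 / i), g i j := by
    intro i hi
    rw [mem_Icc] at hi
    have hxd : x ≤ x ^ 2 / i := by
      rw [Nat.le_div_iff_mul_le (by omega : 0 < i)]
      calc x * i ≤ x * x := Nat.mul_le_mul_left x hi.2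
      _ = x ^ 2 := (sq x).symm
    exact sum_split (g i) hxd
  -- swap the remainder double sum
  have hswap : ∑ i ∈ Finset.Icc 1 x, ∑ j ∈ Finset.Ioc x (x ^ 2 / i), g i j
      = ∑ j ∈ Finset.Ioc x (x ^ 2), ∑ i ∈ Finset.Icc 1 (x ^ 2 / j), g i j := by
    refine Finset.sum_comm' ?_
    intro i j
    simp only [mem_Icc, mem_Ioc]
    constructor
    · rintro ⟨⟨hi1, hi2⟩, hj1, hj2⟩
      have hij : j * i ≤ x ^ 2 := (Nat.le_div_iff_mul_le (by omega : 0 < i)).1 hj2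
      refine ⟨⟨hi1, (Nat.le_div_iff_mul_le (by omega : 0 < j)).2 (by rw [mul_comm]; exact hij)⟩,
        hj1, le_trans (Nat.le_mul_of_pos_right j (by omega)) hij⟩
    · rintro ⟨⟨hi1, hi2⟩, hj1, hj2⟩
      have hij : i * j ≤ x ^ 2 := (Nat.le_div_iff_mul_le (by omega : 0 < j)).1 hi2
      have hix : i ≤ x := by
        have h1 : i * (x + 1) ≤ x * (x + 1) := by
          calc i * (x + 1) ≤ i * j := Nat.mul_le_mul_left i (by omega)
          _ ≤ x ^ 2 := hij
          _ ≤ x * (x + 1) := by nlinarith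
        exact Nat.le_of_mul_le_mul_right h1 (by omega)
      exact ⟨⟨hi1, hix⟩, hj1, (Nat.le_div_iff_mul_le (by omega : 0 < i)).2 (by rw [mul_comm]; exact hij)⟩
  -- remainder equals tail of harmonic sum
  have hrem : ∑ j ∈ Finset.Ioc x (x ^ 2), ∑ i ∈ Finset.Icc 1 (x ^ 2 / j), g i j
      = Hgen s (x ^ 2) - Hgen s x := by
    have h1 : ∀ j ∈ Finset.Ioc x (x ^ 2),
        ∑ i ∈ Finset.Icc 1 (x ^ 2 / j), g i j = 1 / (j : ℝ) ^ s := by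
      intro j hj
      rw [mem_Ioc] at hj
      have hNj : 1 ≤ x ^ 2 / j := (Nat.one_le_div_iff (by omega)).2 hj.2
      have : ∑ i ∈ Finset.Icc 1 (x ^ 2 / j), g i j
          = (1 / (j : ℝ) ^ s) * ∑ i ∈ Finset.Icc 1 (x ^ 2 / j), (1 / (i : ℝ) ^ s) * Mgen s ((x ^ 2 / j) / i) := by
        rw [Finset.mul_sum]
        refine Finset.sum_congr rfl fun i _ => ?_
        have hdd : x ^ 2 / (i * j) = x ^ 2 / j / i := by
          rw [Nat.div_div_eq_div_mul, mul_comm]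
        simp only [hg]
        rw [hdd]; ring
      rw [this, key_s4 s hNj, mul_one]
    rw [Finset.sum_congr rfl h1, Hgen, Hgen,
      sum_split (fun k => 1 / (k : ℝ) ^ s) hxx]
    ring
  -- the target sum equals the g-double-sum
  have hT : ∑ i ∈ Finset.Icc 1 x, ∑ j ∈ Finset.Icc 1 x,
      (1 / ((i : ℝ) * (j : ℝ)) ^ s) * Mgen s (x ^ 2 / (i * j))
      = ∑ i ∈ Finset.Icc 1 x, ∑ j ∈ Finset.Icc 1 x, g i j := by
    refine Finset.sum_congr rfl fun i hi => Finset.sum_congr rfl fun j hj => ?_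
    rw [mem_Icc] at hi hj
    rw [hg]
    rw [Real.mul_rpow (by positivity) (by positivity)]
    ring
  have main : Hgen s x = (∑ i ∈ Finset.Icc 1 x, ∑ j ∈ Finset.Icc 1 x, g i j)
      + (Hgen s (x ^ 2) - Hgen s x) := by
    conv_lhs => rw [← step1]
    rw [Finset.sum_congr rfl step2, Finset.sum_add_distrib, hswap, hrem]
  rw [hT]
  linarith [main]
end

section
/- For every positive integer x, x² = 2x − ∑_{i=1}^{x} ∑_{j=1}^{x} M(⌊x²/(i·j)⌋), where M(n) = ∑_{k=1}^{n} μ(k) is the Mertens function. -/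
open Finset ArithmeticFunction

/-- Mertens function: `M(n) = ∑_{k=1}^{n} μ(k)`. -/
def mertens (n : ℕ) : ℤ :=
  ∑ k ∈ Finset.Icc 1 n, moebius k

private lemma sum_div_moebius (n : ℕ) (hn : 0 < n) :
    ∑ d ∈ n.divisors, (moebius d : ℤ) = if n = 1 then 1 else 0 := by
  have h := congrArg (fun f : ArithmeticFunction ℤ => f n)
    ArithmeticFunction.moebius_mul_coe_zeta
  simp only [ArithmeticFunction.coe_mul_zeta_apply, ArithmeticFunction.one_apply] at h
  exact h

/-- Hyperbola identity: `∑_{m ≤ N} M(⌊N/m⌋) = 1` for `N ≥ 1`. -/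
private lemma sum_mertens_div (N : ℕ) (hN : 1 ≤ N) :
    ∑ m ∈ Finset.Icc 1 N, mertens (N / m) = 1 := by
  have h1 : ∑ m ∈ Finset.Icc 1 N, mertens (N / m)
      = ∑ p ∈ (Finset.Icc 1 N).sigma (fun m => Finset.Icc 1 (N / m)),
          (moebius p.2 : ℤ) := by
    rw [Finset.sum_sigma]; rfl
  have h2 : ∑ p ∈ (Finset.Icc 1 N).sigma (fun m => Finset.Icc 1 (N / m)),
        (moebius p.2 : ℤ)
      = ∑ q ∈ (Finset.Icc 1 N).sigma (fun n => n.divisors), (moebius q.2 : ℤ) := by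
    apply Finset.sum_nbij' (fun p => (⟨p.1 * p.2, p.2⟩ : Σ _ : ℕ, ℕ))
      (fun q => (⟨q.1 / q.2, q.2⟩ : Σ _ : ℕ, ℕ))
    · rintro ⟨m, k⟩ hp
      simp only [Finset.mem_sigma, Finset.mem_Icc] at hp ⊢
      obtain ⟨⟨hm1, hmN⟩, hk1, hkd⟩ := hp
      have hm0 : 0 < m := hm1
      have hmk : m * k ≤ N := by
        rw [mul_comm]; exact (Nat.le_div_iff_mul_le hm0).mp hkd
      refine ⟨⟨Nat.one_le_iff_ne_zero.mpr ?_, hmk⟩, ?_⟩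
      · positivity
      · exact Nat.mem_divisors.mpr ⟨dvd_mul_left k m, by positivity⟩
    · rintro ⟨n, d⟩ hq
      simp only [Finset.mem_sigma, Finset.mem_Icc, Nat.mem_divisors] at hq ⊢
      obtain ⟨⟨hn1, hnN⟩, hd, hn0⟩ := hq
      have hd0 : 0 < d := Nat.pos_of_dvd_of_pos hd (Nat.pos_of_ne_zero hn0)
      have hnd0 : 0 < n / d := Nat.div_pos (Nat.le_of_dvd (Nat.pos_of_ne_zero hn0) hd) hd0
      refine ⟨⟨hnd0, le_trans (Nat.div_le_self n d) hnN⟩, hd0, ?_⟩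
      rw [Nat.le_div_iff_mul_le hnd0, mul_comm, Nat.div_mul_cancel hd]
      exact hnN
    · rintro ⟨m, k⟩ hp
      simp only [Finset.mem_sigma, Finset.mem_Icc] at hp
      have hk0 : 0 < k := hp.2.1
      simp [Nat.mul_div_cancel _ hk0]
    · rintro ⟨n, d⟩ hq
      simp only [Finset.mem_sigma, Finset.mem_Icc, Nat.mem_divisors] at hq
      obtain ⟨_, hd, hn0⟩ := hq
      simp [Nat.div_mul_cancel hd]
    · intro p _; rfl
  rw [h1, h2, Finset.sum_sigma]
  have h3 : ∀ n ∈ Finset.Icc 1 N, ∑ d ∈ n.divisors, (moebius d : ℤ)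
      = if n = 1 then 1 else 0 := by
    intro n hn
    exact sum_div_moebius n (Finset.mem_Icc.mp hn).1
  rw [Finset.sum_congr rfl h3, Finset.sum_ite_eq' (Finset.Icc 1 N) 1 (fun _ => (1 : ℤ))]
  simp [hN]

private lemma sum_mertens_div_mul (N a : ℕ) (ha : 1 ≤ a) (haN : a ≤ N) :
    ∑ b ∈ Finset.Icc 1 (N / a), mertens (N / (a * b)) = 1 := by
  have h : ∀ b : ℕ, N / (a * b) = (N / a) / b := fun b => (Nat.div_div_eq_div_mul N a b).symm
  simp_rw [h]
  exact sum_mertens_div (N / a) ((Nat.one_le_div_iff ha).mpr haN)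

theorem stmt_5 (x : ℕ) (hx : 0 < x) :
    ((x : ℤ) ^ 2) = 2 * (x : ℤ) -
      ∑ i ∈ Finset.Icc 1 x, ∑ j ∈ Finset.Icc 1 x, mertens (x ^ 2 / (i * j)) := by
  set N := x ^ 2 with hN
  have hxN : x ≤ N := Nat.le_self_pow two_ne_zero x
  have hN1 : 1 ≤ N := hx.trans_le hxN
  -- total over all a in Icc 1 N
  have htotal : ∑ a ∈ Finset.Icc 1 N, ∑ b ∈ Finset.Icc 1 (N / a), mertens (N / (a * b))
      = (N : ℤ) := by
    rw [Finset.sum_congr rfl (fun a ha => by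
      obtain ⟨ha1, haN⟩ := Finset.mem_Icc.mp ha
      exact sum_mertens_div_mul N a ha1 haN)]
    simp [Nat.card_Icc]
  -- split Icc 1 N into Icc 1 x and Icc (x+1) N
  have hsplit : Finset.Icc 1 N = Finset.Icc 1 x ∪ Finset.Icc (x + 1) N := by
    ext a
    simp only [Finset.mem_Icc, Finset.mem_union]
    omega
  have hdisj : Disjoint (Finset.Icc 1 x) (Finset.Icc (x + 1) N) := by
    apply Finset.disjoint_left.mpr
    intro a h1 h2
    have := (Finset.mem_Icc.mp h1).2
    have := (Finset.mem_Icc.mp h2).1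
    omega
  have hbig : ∑ a ∈ Finset.Icc (x + 1) N, ∑ b ∈ Finset.Icc 1 (N / a), mertens (N / (a * b))
      = (N : ℤ) - (x : ℤ) := by
    rw [Finset.sum_congr rfl (fun a ha => by
      obtain ⟨ha1, haN⟩ := Finset.mem_Icc.mp ha
      exact sum_mertens_div_mul N a (by omega) haN)]
    rw [Finset.sum_const, Nat.card_Icc, nsmul_eq_mul, mul_one,
      Nat.cast_sub (by omega : x + 1 ≤ N + 1)]
    push_cast
    ring
  have hx_sum : ∑ a ∈ Finset.Icc 1 x, ∑ b ∈ Finset.Icc 1 (N / a), mertens (N / (a * b))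
      = (x : ℤ) := by
    have := htotal
    rw [hsplit, Finset.sum_union hdisj, hbig] at this
    linarith
  -- for a ≤ x, split inner Icc 1 (N/a) into Icc 1 x and Icc (x+1) (N/a)
  have hinner : ∀ a ∈ Finset.Icc 1 x,
      ∑ b ∈ Finset.Icc 1 (N / a), mertens (N / (a * b))
      = (∑ b ∈ Finset.Icc 1 x, mertens (N / (a * b)))
        + ∑ b ∈ Finset.Icc (x + 1) (N / a), mertens (N / (a * b)) := by
    intro a ha
    obtain ⟨ha1, hax⟩ := Finset.mem_Icc.mp ha
    have hxNa : x ≤ N / a := by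
      rw [Nat.le_div_iff_mul_le ha1]
      calc x * a ≤ x * x := Nat.mul_le_mul_left x hax
        _ = N := by rw [hN]; ring
    rw [← Finset.sum_union (by
      apply Finset.disjoint_left.mpr
      intro b h1 h2
      have := (Finset.mem_Icc.mp h1).2
      have := (Finset.mem_Icc.mp h2).1
      omega)]
    congr 1
    ext b
    simp only [Finset.mem_Icc, Finset.mem_union]
    omega
  -- the remainder sum, evaluated by swapping the order of summation
  have hrem : ∑ a ∈ Finset.Icc 1 x, ∑ b ∈ Finset.Icc (x + 1) (N / a), mertens (N / (a * b))
      = (N : ℤ) - (x : ℤ) := by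
    rw [Finset.sum_comm' (t' := Finset.Icc (x + 1) N) (s' := fun b => Finset.Icc 1 (N / b)) ?_]
    · rw [Finset.sum_congr rfl (fun b hb => by
        obtain ⟨hb1, hbN⟩ := Finset.mem_Icc.mp hb
        have : ∀ a : ℕ, N / (a * b) = N / (b * a) := fun a => by rw [mul_comm]
        simp_rw [this]
        exact sum_mertens_div_mul N b (by omega) hbN)]
      rw [Finset.sum_const, Nat.card_Icc, nsmul_eq_mul, mul_one,
        Nat.cast_sub (by omega : x + 1 ≤ N + 1)]
      push_cast
      ring
    · intro a b
      simp only [Finset.mem_Icc]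
      constructor
      · rintro ⟨⟨ha1, hax⟩, hb1, hbNa⟩
        have hab : a * b ≤ N := by
          rw [Nat.le_div_iff_mul_le ha1] at hbNa
          linarith [hbNa]
        refine ⟨⟨ha1, ?_⟩, hb1, ?_⟩
        · rw [Nat.le_div_iff_mul_le (by omega : 0 < b)]
          exact hab
        · calc b ≤ a * b := Nat.le_mul_of_pos_left b ha1
            _ ≤ N := hab
      · rintro ⟨⟨ha1, haNb⟩, hb1, hbN⟩
        have hb0 : 0 < b := by omega
        have hab : a * b ≤ N := by
          rw [Nat.le_div_iff_mul_le hb0] at haNb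
          exact haNb
        have hax : a ≤ x := by
          by_contra hcon
          push_neg at hcon
          have : (x + 1) * (x + 1) ≤ a * b := Nat.mul_le_mul hcon hb1
          have h2 : (x + 1) * (x + 1) ≤ N := le_trans this hab
          have h3 : N < (x + 1) * (x + 1) := by rw [hN]; nlinarith
          omega
        refine ⟨⟨ha1, hax⟩, hb1, ?_⟩
        rw [Nat.le_div_iff_mul_le ha1, mul_comm]
        exact hab
  have hS : ∑ i ∈ Finset.Icc 1 x, ∑ j ∈ Finset.Icc 1 x, mertens (N / (i * j))
      = 2 * (x : ℤ) - (N : ℤ) := by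
    have := hx_sum
    rw [Finset.sum_congr rfl hinner, Finset.sum_add_distrib, hrem] at this
    linarith
  rw [hS]
  push_cast [hN]
  ring
end

section
/- For every positive integer x, H_{x²} = 2·H_{x} − ∑_{i=1}^{x} ∑_{j=1}^{x} (1/(i·j)) · m_{⌊x²/(i·j)⌋}, where H_n = ∑_{k=1}^{n} 1/k is the n-th harmonic number and m_n = ∑_{k=1}^{n} μ(k)/k. -/
open Finset ArithmeticFunction
open scoped ArithmeticFunction.zeta ArithmeticFunction.Moebius

/-- Harmonic number: `H_n = ∑_{k=1}^{n} 1/k`. -/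
noncomputable def harmonicNum (n : ℕ) : ℝ :=
  ∑ k ∈ Finset.Icc 1 n, 1 / (k : ℝ)

/-- `m_n = ∑_{k=1}^{n} μ(k)/k`. -/
noncomputable def mSum (n : ℕ) : ℝ :=
  ∑ k ∈ Finset.Icc 1 n, (moebius k : ℝ) / (k : ℝ)

namespace Stmt6Aux

/-- Indicator of `x < n`, as an arithmetic function. -/
def G (x : ℕ) : ArithmeticFunction ℤ :=
  ⟨fun n => if x < n then 1 else 0, by simp⟩

lemma G_apply (x n : ℕ) : G x n = if x < n then 1 else 0 := rfl

/-- Number of ways to write `d = i*j` with `i,j ≤ x` (as a divisor-sum). -/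
def A (x : ℕ) : ArithmeticFunction ℤ :=
  ⟨fun d => ∑ i ∈ d.divisors, (if i ≤ x ∧ d / i ≤ x then 1 else 0), by simp⟩

lemma A_apply (x d : ℕ) :
    A x d = ∑ i ∈ d.divisors, (if i ≤ x ∧ d / i ≤ x then (1 : ℤ) else 0) := rfl

lemma card_pairs (x d : ℕ) (hd : d ≠ 0) :
    ((((Finset.Icc 1 x) ×ˢ (Finset.Icc 1 x)).filter (fun p => p.1 * p.2 = d)).card : ℤ)
      = A x d := by
  have hcard : (((Finset.Icc 1 x) ×ˢ (Finset.Icc 1 x)).filter (fun p => p.1 * p.2 = d)).card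
      = (d.divisors.filter (fun i => i ≤ x ∧ d / i ≤ x)).card := by
    apply Finset.card_bij' (fun p _ => p.1) (fun i _ => (i, d / i))
    · rintro ⟨i, j⟩ hp
      simp only [Finset.mem_filter, Finset.mem_product, Finset.mem_Icc] at hp
      obtain ⟨⟨⟨hi1, hi2⟩, hj1, hj2⟩, hij⟩ := hp
      have hdvd : i ∣ d := ⟨j, hij.symm⟩
      have hji : d / i = j := by
        rw [← hij]; exact Nat.mul_div_cancel_left j (by omega)
      simp only [Finset.mem_filter, Nat.mem_divisors]
      exact ⟨⟨hdvd, hd⟩, hi2, by omega⟩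
    · intro i hi
      simp only [Finset.mem_filter, Nat.mem_divisors] at hi
      obtain ⟨⟨hdvd, _⟩, hix, hdix⟩ := hi
      have hi0 : 0 < i := Nat.pos_of_dvd_of_pos hdvd (Nat.pos_of_ne_zero hd)
      have hdi0 : 0 < d / i :=
        Nat.div_pos (Nat.le_of_dvd (Nat.pos_of_ne_zero hd) hdvd) hi0
      simp only [Finset.mem_filter, Finset.mem_product, Finset.mem_Icc]
      exact ⟨⟨⟨hi0, hix⟩, ⟨hdi0, hdix⟩⟩, Nat.mul_div_cancel' hdvd⟩
    · rintro ⟨i, j⟩ hp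
      simp only [Finset.mem_filter, Finset.mem_product, Finset.mem_Icc] at hp
      obtain ⟨⟨⟨hi1, _⟩, _⟩, hij⟩ := hp
      have hji : d / i = j := by
        rw [← hij]; exact Nat.mul_div_cancel_left j (by omega)
      simp [hji]
    · intro i hi; rfl
  rw [hcard, A_apply, Finset.card_filter]
  push_cast
  rfl

/-- Hyperbola-style reindexing. -/
lemma key (N : ℕ) (f : ℕ → ℕ → ℝ) :
    ∑ d ∈ Finset.Icc 1 N, ∑ k ∈ Finset.Icc 1 (N / d), f d k
      = ∑ n ∈ Finset.Icc 1 N, ∑ p ∈ n.divisorsAntidiagonal, f p.1 p.2 := by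
  rw [Finset.sum_sigma', Finset.sum_sigma']
  refine Finset.sum_nbij' (fun a => ⟨a.1 * a.2, (a.1, a.2)⟩)
    (fun b => ⟨b.2.1, b.2.2⟩) ?_ ?_ ?_ ?_ ?_
  · rintro ⟨d, k⟩ ha
    simp only [Finset.mem_sigma, Finset.mem_Icc] at ha
    obtain ⟨⟨hd1, hdN⟩, hk1, hkN⟩ := ha
    have hdk : d * k ≤ N := by
      have := (Nat.le_div_iff_mul_le (by omega : 0 < d)).mp hkN
      calc d * k = k * d := Nat.mul_comm d k
        _ ≤ N := this
    have hdk1 : 1 ≤ d * k := Nat.one_le_iff_ne_zero.mpr (Nat.mul_ne_zero (by omega) (by omega))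
    simp only [Finset.mem_sigma, Finset.mem_Icc, Nat.mem_divisorsAntidiagonal]
    refine ⟨⟨hdk1, hdk⟩, ?_, by omega⟩
    trivial
  · rintro ⟨n, d, e⟩ hb
    simp only [Finset.mem_sigma, Finset.mem_Icc, Nat.mem_divisorsAntidiagonal] at hb
    obtain ⟨⟨hn1, hnN⟩, hde, hne⟩ := hb
    have hd0 : 0 < d := by
      rcases Nat.eq_zero_or_pos d with h | h
      · exfalso; apply hne; rw [← hde, h, Nat.zero_mul]
      · exact h
    have he0 : 0 < e := by
      rcases Nat.eq_zero_or_pos e with h | h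
      · exfalso; apply hne; rw [← hde, h, Nat.mul_zero]
      · exact h
    have hdn : d ≤ n := by
      calc d = d * 1 := (Nat.mul_one d).symm
        _ ≤ d * e := Nat.mul_le_mul_left d he0
        _ = n := hde
    simp only [Finset.mem_sigma, Finset.mem_Icc]
    refine ⟨⟨hd0, le_trans hdn hnN⟩, he0, ?_⟩
    rw [Nat.le_div_iff_mul_le hd0]
    calc e * d = d * e := Nat.mul_comm e d
      _ = n := hde
      _ ≤ N := hnN
  · rintro ⟨d, k⟩ _; rfl
  · rintro ⟨n, d, e⟩ hb
    simp only [Finset.mem_sigma, Finset.mem_Icc, Nat.mem_divisorsAntidiagonal] at hb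
    obtain ⟨-, hde, -⟩ := hb
    subst hde
    rfl
  · rintro ⟨d, k⟩ _; rfl

lemma A_eq (x d : ℕ) (hd : 0 < d) (hdx : d ≤ x ^ 2) :
    A x d = ((ζ : ArithmeticFunction ℤ) * ζ) d - 2 * ((G x * ζ) d) := by
  rw [A_apply, ArithmeticFunction.coe_mul_zeta_apply, ArithmeticFunction.coe_mul_zeta_apply]
  have hsplit : ∀ i ∈ d.divisors,
      (if i ≤ x ∧ d / i ≤ x then (1 : ℤ) else 0)
        = (ζ : ArithmeticFunction ℤ) i - G x i - G x (d / i) := by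
    intro i hi
    obtain ⟨hdvd, -⟩ := Nat.mem_divisors.mp hi
    have hipos : 0 < i := Nat.pos_of_mem_divisors hi
    have heq : i * (d / i) = d := Nat.mul_div_cancel' hdvd
    have hnb : ¬(x < i ∧ x < d / i) := by
      rintro ⟨h1, h2⟩
      have h5 : (x + 1) * (x + 1) ≤ i * (d / i) := Nat.mul_le_mul h1 h2
      rw [heq] at h5
      rw [pow_two] at hdx
      nlinarith
    have hz : (ζ : ArithmeticFunction ℤ) i = 1 := by
      rw [ArithmeticFunction.natCoe_apply, ArithmeticFunction.zeta_apply,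
        if_neg (by omega : ¬ i = 0)]
      norm_num
    rw [hz, G_apply, G_apply]
    split_ifs <;> omega
  rw [Finset.sum_congr rfl hsplit, Finset.sum_sub_distrib, Finset.sum_sub_distrib,
    Nat.sum_div_divisors d (fun i => G x i)]
  ring

lemma zzm : ((ζ : ArithmeticFunction ℤ) * ζ * μ) = (ζ : ArithmeticFunction ℤ) := by
  rw [mul_assoc, mul_comm (ζ : ArithmeticFunction ℤ) μ, moebius_mul_coe_zeta, mul_one]

lemma gzm (x : ℕ) : (G x * (ζ : ArithmeticFunction ℤ) * μ) = G x := by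
  rw [mul_assoc, mul_comm (ζ : ArithmeticFunction ℤ) μ, moebius_mul_coe_zeta, mul_one]

lemma c_eval (x n : ℕ) (hn1 : 1 ≤ n) (hnN : n ≤ x ^ 2) :
    ∑ p ∈ n.divisorsAntidiagonal, (A x p.1) * (μ p.2 : ℤ)
      = 1 - 2 * (if x < n then 1 else 0) := by
  have h1 : ∑ p ∈ n.divisorsAntidiagonal, (A x p.1) * (μ p.2 : ℤ)
      = ∑ p ∈ n.divisorsAntidiagonal,
          ((((ζ : ArithmeticFunction ℤ) * ζ) p.1) * μ p.2
            - 2 * (((G x * ζ) p.1) * μ p.2)) := by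
    refine Finset.sum_congr rfl fun p hp => ?_
    obtain ⟨hpe, hne⟩ := Nat.mem_divisorsAntidiagonal.mp hp
    have hp1 : 0 < p.1 := by
      rcases Nat.eq_zero_or_pos p.1 with h | h
      · exfalso; apply hne; rw [← hpe, h, Nat.zero_mul]
      · exact h
    have hp1N : p.1 ≤ x ^ 2 :=
      le_trans (Nat.le_of_dvd (by omega) ⟨p.2, hpe.symm⟩) hnN
    rw [A_eq x p.1 hp1 hp1N]; ring
  rw [h1, Finset.sum_sub_distrib, ← Finset.mul_sum,
    ← ArithmeticFunction.mul_apply, ← ArithmeticFunction.mul_apply, zzm, gzm x]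
  rw [ArithmeticFunction.natCoe_apply, ArithmeticFunction.zeta_apply,
    if_neg (by omega : ¬ n = 0), G_apply]
  norm_num

end Stmt6Aux

open Stmt6Aux
theorem stmt_6 (x : ℕ) (hx : 0 < x) :
    harmonicNum (x ^ 2) = 2 * harmonicNum x -
      ∑ i ∈ Finset.Icc 1 x, ∑ j ∈ Finset.Icc 1 x,
        (1 / ((i : ℝ) * (j : ℝ))) * mSum (x ^ 2 / (i * j)) := by
  have hN1 : 1 ≤ x ^ 2 := Nat.one_le_pow _ _ hx
  have hxN : x ≤ x ^ 2 := Nat.le_self_pow two_ne_zero x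
  set P : Finset (ℕ × ℕ) := (Finset.Icc 1 x) ×ˢ (Finset.Icc 1 x) with hP
  set g : ℕ → ℝ := fun d => (1 / (d : ℝ)) * mSum (x ^ 2 / d) with hg
  set F : ℕ → ℕ → ℝ :=
    fun d k => ((A x d : ℤ) : ℝ) * ((μ k : ℤ) : ℝ) / ((d : ℝ) * (k : ℝ)) with hF
  -- Step 1: double sum as a sum over the product, in terms of g.
  have h1 : (∑ i ∈ Finset.Icc 1 x, ∑ j ∈ Finset.Icc 1 x,
        (1 / ((i : ℝ) * (j : ℝ))) * mSum (x ^ 2 / (i * j)))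
      = ∑ p ∈ P, g (p.1 * p.2) := by
    rw [hP, Finset.sum_product]
    refine Finset.sum_congr rfl fun i _ => Finset.sum_congr rfl fun j _ => ?_
    simp only [hg]
    push_cast
    ring
  -- Step 2: fiberwise over d = i*j.
  have hmaps : ∀ p ∈ P, p.1 * p.2 ∈ Finset.Icc 1 (x ^ 2) := by
    rintro ⟨i, j⟩ hp
    simp only [hP, Finset.mem_product, Finset.mem_Icc] at hp
    obtain ⟨⟨hi1, hi2⟩, hj1, hj2⟩ := hp
    simp only [Finset.mem_Icc]
    constructor
    · exact Nat.one_le_iff_ne_zero.mpr (Nat.mul_ne_zero (by omega) (by omega))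
    · calc i * j ≤ x * x := Nat.mul_le_mul hi2 hj2
        _ = x ^ 2 := (pow_two x).symm
  have h2 : ∑ p ∈ P, g (p.1 * p.2)
      = ∑ d ∈ Finset.Icc 1 (x ^ 2),
          ∑ p ∈ P.filter (fun p => p.1 * p.2 = d), g (p.1 * p.2) :=
    (Finset.sum_fiberwise_of_maps_to hmaps _).symm
  have h3 : ∀ d ∈ Finset.Icc 1 (x ^ 2),
      ∑ p ∈ P.filter (fun p => p.1 * p.2 = d), g (p.1 * p.2)
        = ((A x d : ℤ) : ℝ) * g d := by
    intro d hd
    have hd0 : d ≠ 0 := by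
      simp only [Finset.mem_Icc] at hd; omega
    rw [Finset.sum_congr rfl (fun p hp => by rw [(Finset.mem_filter.mp hp).2]),
      Finset.sum_const, nsmul_eq_mul, ← card_pairs x d hd0]
    push_cast
    ring
  -- Step 3: expand mSum into F.
  have h4 : ∀ d : ℕ, ((A x d : ℤ) : ℝ) * g d
      = ∑ k ∈ Finset.Icc 1 (x ^ 2 / d), F d k := by
    intro d
    simp only [hg, hF, mSum, Finset.mul_sum]
    refine Finset.sum_congr rfl fun k _ => ?_
    ring
  -- Step 4: hyperbola reindexing and inner evaluation.
  have h6 : ∀ n ∈ Finset.Icc 1 (x ^ 2),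
      ∑ p ∈ n.divisorsAntidiagonal, F p.1 p.2
        = (1 / (n : ℝ)) * (((1 : ℤ) - 2 * (if x < n then 1 else 0) : ℤ) : ℝ) := by
    intro n hn
    simp only [Finset.mem_Icc] at hn
    have hterm : ∀ p ∈ n.divisorsAntidiagonal,
        F p.1 p.2 = (1 / (n : ℝ)) * (((A x p.1) * (μ p.2 : ℤ) : ℤ) : ℝ) := by
      intro p hp
      obtain ⟨hpe, hne⟩ := Nat.mem_divisorsAntidiagonal.mp hp
      have hcast : ((p.1 : ℝ) * (p.2 : ℝ)) = (n : ℝ) := by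
        rw [← hpe]; push_cast; ring
      simp only [hF]
      rw [hcast]
      push_cast
      ring
    rw [Finset.sum_congr rfl hterm, ← Finset.mul_sum]
    congr 1
    rw [← Int.cast_sum, c_eval x n hn.1 hn.2]
  -- Step 5: final evaluation of the single sum.
  have h7 : ∑ n ∈ Finset.Icc 1 (x ^ 2),
      (1 / (n : ℝ)) * (((1 : ℤ) - 2 * (if x < n then 1 else 0) : ℤ) : ℝ)
        = 2 * harmonicNum x - harmonicNum (x ^ 2) := by
    have hsplit : ∀ m : ℕ, Finset.Icc 1 m = Finset.Ioc 0 m := fun m =>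
      Finset.Icc_add_one_left_eq_Ioc 0 m
    have e3 : harmonicNum x + ∑ n ∈ Finset.Ioc x (x ^ 2), 1 / (n : ℝ)
        = harmonicNum (x ^ 2) := by
      unfold harmonicNum
      rw [hsplit, hsplit, Finset.sum_Ioc_consecutive _ (Nat.zero_le x) hxN]
    rw [hsplit, ← Finset.sum_Ioc_consecutive _ (Nat.zero_le x) hxN]
    have e1 : ∑ n ∈ Finset.Ioc 0 x,
        (1 / (n : ℝ)) * (((1 : ℤ) - 2 * (if x < n then 1 else 0) : ℤ) : ℝ)
          = harmonicNum x := by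
      rw [harmonicNum, hsplit]
      refine Finset.sum_congr rfl fun n hn => ?_
      simp only [Finset.mem_Ioc] at hn
      rw [if_neg (by omega : ¬ x < n)]
      push_cast
      ring
    have e2 : ∑ n ∈ Finset.Ioc x (x ^ 2),
        (1 / (n : ℝ)) * (((1 : ℤ) - 2 * (if x < n then 1 else 0) : ℤ) : ℝ)
          = -∑ n ∈ Finset.Ioc x (x ^ 2), 1 / (n : ℝ) := by
      rw [← Finset.sum_neg_distrib]
      refine Finset.sum_congr rfl fun n hn => ?_
      simp only [Finset.mem_Ioc] at hn
      rw [if_pos (by omega : x < n)]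
      push_cast
      ring
    rw [e1, e2]
    linarith [e3]
  -- Assemble.
  rw [h1, h2, Finset.sum_congr rfl h3, Finset.sum_congr rfl (fun d _ => h4 d),
    key (x ^ 2) F, Finset.sum_congr rfl h6, h7]
  ring
end

section
/- As x → ∞ through positive integers, ∑_{i=1}^{x} ∑_{j=1}^{x} (1/(i·j)) · m_{⌊x²/(i·j)⌋} = γ + O(1/x); that is, there exist constants C > 0 and x₁ such that for all integers x ≥ x₁, |∑_{i=1}^{x} ∑_{j=1}^{x} (1/(i·j)) · m_{⌊x²/(i·j)⌋} − γ| ≤ C/x, where γ is Euler's constant and m_n = ∑_{k=1}^{n} μ(k)/k. -/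
open Finset ArithmeticFunction

lemma expand_div (M N j : ℕ) (hj : 1 ≤ j) (hNM : N ≤ M) (f : ℕ → ℝ) :
    ∑ k ∈ Icc 1 (N / j), f k = ∑ k ∈ Icc 1 M, if j * k ≤ N then f k else 0 := by
  have hfil : (Icc 1 M).filter (fun k => j * k ≤ N) = Icc 1 (N / j) := by
    ext k
    simp only [Finset.mem_filter, Finset.mem_Icc]
    constructor
    · rintro ⟨⟨h1, _⟩, h2⟩
      exact ⟨h1, (Nat.le_div_iff_mul_le (by omega)).2 (by rw [mul_comm]; exact h2)⟩
    · rintro ⟨h1, h2⟩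
      have hkj : k * j ≤ N := (Nat.le_div_iff_mul_le (by omega)).1 h2
      have hk : k ≤ N := le_trans (Nat.le_mul_of_pos_right k (by omega)) hkj
      exact ⟨⟨h1, hk.trans hNM⟩, by rw [mul_comm]; exact hkj⟩
  rw [← hfil, Finset.sum_filter]

lemma moebius_sum_real (n : ℕ) :
    ∑ d ∈ n.divisors, ((moebius d : ℤ) : ℝ) = if n = 1 then 1 else 0 := by
  have h : ((moebius : ArithmeticFunction ℝ) * zeta) n = (1 : ArithmeticFunction ℝ) n := by
    rw [coe_moebius_mul_coe_zeta]
  rw [coe_mul_zeta_apply] at h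
  simp only [intCoe_apply] at h
  rw [h, one_apply]

lemma pair_sum_eq (M n : ℕ) (hn : 1 ≤ n) (hnM : n ≤ M) :
    ∑ j ∈ Icc 1 M, ∑ k ∈ Icc 1 M,
      (if j * k = n then (moebius k : ℝ) / ((j : ℝ) * (k : ℝ)) else 0)
      = if n = 1 then 1 else 0 := by
  rw [← Finset.sum_product']
  have hfil : ((Icc 1 M) ×ˢ (Icc 1 M)).filter (fun p : ℕ × ℕ => p.1 * p.2 = n)
      = n.divisorsAntidiagonal := by
    ext ⟨j, k⟩
    simp only [Finset.mem_filter, Finset.mem_product, Finset.mem_Icc,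
      Nat.mem_divisorsAntidiagonal]
    constructor
    · rintro ⟨⟨⟨h1, _⟩, ⟨h2, _⟩⟩, h3⟩
      exact ⟨h3, by omega⟩
    · rintro ⟨h3, _⟩
      have hj1 : 1 ≤ j := Nat.pos_of_ne_zero (by rintro rfl; simp at h3; omega)
      have hk1 : 1 ≤ k := Nat.pos_of_ne_zero (by rintro rfl; simp at h3; omega)
      have hjn : j ≤ n := by calc j = j * 1 := (mul_one j).symm
                                 _ ≤ j * k := Nat.mul_le_mul_left j hk1
                                 _ = n := h3
      have hkn : k ≤ n := by calc k = 1 * k := (one_mul k).symm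
                                 _ ≤ j * k := Nat.mul_le_mul_right k hj1
                                 _ = n := h3
      exact ⟨⟨⟨hj1, hjn.trans hnM⟩, ⟨hk1, hkn.trans hnM⟩⟩, h3⟩
  rw [← Finset.sum_filter, hfil]
  have hcongr : ∀ p ∈ n.divisorsAntidiagonal,
      (moebius p.2 : ℝ) / ((p.1 : ℝ) * (p.2 : ℝ)) = (moebius p.2 : ℝ) / (n : ℝ) := by
    rintro ⟨j, k⟩ hp
    obtain ⟨h3, -⟩ := Nat.mem_divisorsAntidiagonal.1 hp
    rw [← h3]; push_cast; ring_nf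
  rw [Finset.sum_congr rfl hcongr, ← Finset.sum_div, ← Nat.map_div_left_divisors,
    Finset.sum_map]
  show (∑ d ∈ n.divisors, ((moebius d : ℤ) : ℝ)) / (n : ℝ) = if n = 1 then 1 else 0
  rw [moebius_sum_real]
  split_ifs with h
  · subst h; norm_num
  · simp

lemma P_eq_one (M N : ℕ) (hN : 1 ≤ N) (hNM : N ≤ M) :
    ∑ j ∈ Icc 1 M, ∑ k ∈ Icc 1 M,
      (if j * k ≤ N then (moebius k : ℝ) / ((j : ℝ) * (k : ℝ)) else 0) = 1 := by
  have step1 : ∀ j ∈ Icc 1 M, ∀ k ∈ Icc 1 M,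
      (if j * k ≤ N then (moebius k : ℝ) / ((j : ℝ) * (k : ℝ)) else 0)
      = ∑ n ∈ Icc 1 N, (if j * k = n then (moebius k : ℝ) / ((j : ℝ) * (k : ℝ)) else 0) := by
    intro j hj k hk
    rw [Finset.sum_ite_eq (Icc 1 N) (j * k) (fun _ => (moebius k : ℝ) / ((j : ℝ) * (k : ℝ)))]
    simp only [Finset.mem_Icc] at hj hk ⊢
    have : 1 ≤ j * k := Nat.mul_pos hj.1 hk.1
    by_cases h : j * k ≤ N
    · rw [if_pos h, if_pos ⟨this, h⟩]
    · rw [if_neg h, if_neg (by tauto)]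
  calc ∑ j ∈ Icc 1 M, ∑ k ∈ Icc 1 M,
        (if j * k ≤ N then (moebius k : ℝ) / ((j : ℝ) * (k : ℝ)) else 0)
      = ∑ j ∈ Icc 1 M, ∑ k ∈ Icc 1 M, ∑ n ∈ Icc 1 N,
        (if j * k = n then (moebius k : ℝ) / ((j : ℝ) * (k : ℝ)) else 0) := by
        refine Finset.sum_congr rfl fun j hj => Finset.sum_congr rfl fun k hk => step1 j hj k hk
    _ = ∑ n ∈ Icc 1 N, ∑ j ∈ Icc 1 M, ∑ k ∈ Icc 1 M,
        (if j * k = n then (moebius k : ℝ) / ((j : ℝ) * (k : ℝ)) else 0) := by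
        rw [Finset.sum_congr rfl fun j (_ : j ∈ Icc 1 M) =>
          (Finset.sum_comm :
            (∑ k ∈ Icc 1 M, ∑ n ∈ Icc 1 N,
              (if j * k = n then (moebius k : ℝ) / ((j : ℝ) * (k : ℝ)) else 0))
            = ∑ n ∈ Icc 1 N, ∑ k ∈ Icc 1 M,
              (if j * k = n then (moebius k : ℝ) / ((j : ℝ) * (k : ℝ)) else 0))]
        exact Finset.sum_comm
    _ = ∑ n ∈ Icc 1 N, (if n = 1 then (1 : ℝ) else 0) := by
        refine Finset.sum_congr rfl fun n hn => ?_
        rw [Finset.mem_Icc] at hn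
        exact pair_sum_eq M n hn.1 (hn.2.trans hNM)
    _ = 1 := by
        rw [Finset.sum_ite_eq' (Icc 1 N) 1 (fun _ => (1 : ℝ))]
        rw [if_pos (Finset.mem_Icc.2 ⟨le_refl 1, hN⟩)]

lemma inner_eval (M i : ℕ) (hi1 : 1 ≤ i) (hiM : i ≤ M) :
    ∑ j ∈ Icc 1 M, ∑ k ∈ Icc 1 M,
      (if i * j * k ≤ M then (moebius k : ℝ) / ((i : ℝ) * (j : ℝ) * (k : ℝ)) else 0)
      = 1 / (i : ℝ) := by
  have hcond : ∀ j k : ℕ, (i * j * k ≤ M) ↔ (j * k ≤ M / i) := by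
    intro j k
    rw [Nat.le_div_iff_mul_le hi1]
    have : j * k * i = i * j * k := by ring
    omega
  have hterm : ∀ j ∈ Icc 1 M, ∀ k ∈ Icc 1 M,
      (if i * j * k ≤ M then (moebius k : ℝ) / ((i : ℝ) * (j : ℝ) * (k : ℝ)) else 0)
      = (1 / (i : ℝ)) * (if j * k ≤ M / i then (moebius k : ℝ) / ((j : ℝ) * (k : ℝ)) else 0) := by
    intro j hj k hk
    by_cases h : j * k ≤ M / i
    · rw [if_pos ((hcond j k).2 h), if_pos h]; ring
    · rw [if_neg (fun hc => h ((hcond j k).1 hc)), if_neg h, mul_zero]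
  rw [Finset.sum_congr rfl (fun j hj => Finset.sum_congr rfl (fun k hk => hterm j hj k hk))]
  simp_rw [← Finset.mul_sum]
  rw [P_eq_one M (M / i) ((Nat.one_le_div_iff (by omega)).2 hiM) (Nat.div_le_self M i), mul_one]

lemma harmonic_real (n : ℕ) : (harmonic n : ℝ) = ∑ i ∈ Icc 1 n, 1 / (i : ℝ) := by
  rw [harmonic_eq_sum_Icc]
  push_cast
  simp [one_div]

lemma key_identity (x : ℕ) (hx : 1 ≤ x) :
    ∑ i ∈ Icc 1 x, ∑ j ∈ Icc 1 x,
        (1 / ((i : ℝ) * (j : ℝ))) * mSum (x ^ 2 / (i * j))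
      = 2 * (harmonic x : ℝ) - (harmonic (x ^ 2) : ℝ) := by
  set M := x ^ 2 with hM
  have hxM : x ≤ M := Nat.le_self_pow (by norm_num) x
  have hM1 : 1 ≤ M := le_trans hx hxM
  set F : ℕ → ℕ → ℝ := fun i j => ∑ k ∈ Icc 1 M,
    if i * j * k ≤ M then (moebius k : ℝ) / ((i : ℝ) * (j : ℝ) * (k : ℝ)) else 0 with hF
  have step0 : ∑ i ∈ Icc 1 x, ∑ j ∈ Icc 1 x,
      (1 / ((i : ℝ) * (j : ℝ))) * mSum (M / (i * j))
      = ∑ i ∈ Icc 1 x, ∑ j ∈ Icc 1 x, F i j := by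
    refine Finset.sum_congr rfl fun i hi => Finset.sum_congr rfl fun j hj => ?_
    rw [Finset.mem_Icc] at hi hj
    have hij1 : 1 ≤ i * j := Nat.mul_pos hi.1 hj.1
    rw [mSum, expand_div M M (i * j) hij1 le_rfl, Finset.mul_sum, hF]
    refine Finset.sum_congr rfl fun k hk => ?_
    rw [Finset.mem_Icc] at hk
    rw [mul_ite, mul_zero]
    by_cases h : i * j * k ≤ M
    · rw [if_pos h, if_pos h]
      have hi0 : (i : ℝ) ≠ 0 := Nat.cast_ne_zero.2 (by omega)
      have hj0 : (j : ℝ) ≠ 0 := Nat.cast_ne_zero.2 (by omega)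
      have hk0 : (k : ℝ) ≠ 0 := Nat.cast_ne_zero.2 (by omega)
      field_simp
    · rw [if_neg h, if_neg h]
  have hrow : ∀ i ∈ Icc 1 M, ∑ j ∈ Icc 1 M, F i j = 1 / (i : ℝ) := by
    intro i hi
    rw [Finset.mem_Icc] at hi
    exact inner_eval M i hi.1 hi.2
  have hsplit : ∀ G : ℕ → ℝ,
      ∑ i ∈ Icc 1 M, G i = ∑ i ∈ Icc 1 x, G i + ∑ i ∈ Ioc x M, G i := by
    intro G
    have h1 : Icc 1 M = Ioc 0 M := by ext a; simp only [mem_Icc, mem_Ioc]; omega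
    have h2 : Icc 1 x = Ioc 0 x := by ext a; simp only [mem_Icc, mem_Ioc]; omega
    rw [h1, h2, Finset.sum_Ioc_consecutive G (Nat.zero_le x) hxM]
  have hsymm : ∀ s t : Finset ℕ,
      ∑ i ∈ s, ∑ j ∈ t, F i j = ∑ i ∈ t, ∑ j ∈ s, F i j := by
    intro s t
    rw [Finset.sum_comm]
    refine Finset.sum_congr rfl fun j _ => Finset.sum_congr rfl fun i _ => ?_
    simp only [hF]
    refine Finset.sum_congr rfl fun k _ => ?_
    rw [mul_comm i j, mul_comm (i : ℝ) (j : ℝ)]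
  have hvanish : ∑ i ∈ Ioc x M, ∑ j ∈ Ioc x M, F i j = 0 := by
    refine Finset.sum_eq_zero fun i hi => Finset.sum_eq_zero fun j hj =>
      Finset.sum_eq_zero fun k hk => ?_
    rw [Finset.mem_Ioc] at hi hj
    rw [Finset.mem_Icc] at hk
    rw [if_neg]
    have h1 : (x + 1) * (x + 1) ≤ i * j := Nat.mul_le_mul hi.1 hj.1
    have h2 : i * j ≤ i * j * k := Nat.le_mul_of_pos_right _ hk.1
    have h3 : M < (x + 1) * (x + 1) := by rw [hM]; nlinarith
    omega
  set Hx : ℝ := ∑ i ∈ Icc 1 x, 1 / (i : ℝ) with hHx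
  set HM : ℝ := ∑ i ∈ Icc 1 M, 1 / (i : ℝ) with hHM
  set T : ℝ := ∑ i ∈ Ioc x M, 1 / (i : ℝ) with hT
  have hHsplit : HM = Hx + T := hsplit _
  have hfullrow : ∑ i ∈ Icc 1 M, ∑ j ∈ Icc 1 M, F i j = HM :=
    Finset.sum_congr rfl hrow
  have hIocrow : ∑ i ∈ Ioc x M, ∑ j ∈ Icc 1 M, F i j = T := by
    refine Finset.sum_congr rfl fun i hi => hrow i ?_
    rw [Finset.mem_Ioc] at hi
    rw [Finset.mem_Icc]
    omega
  have hIccxfull : ∑ i ∈ Icc 1 x, ∑ j ∈ Icc 1 M, F i j = HM - T := by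
    have := hsplit (fun i => ∑ j ∈ Icc 1 M, F i j)
    rw [hfullrow] at this
    rw [hIocrow] at this
    linarith
  have hQ : ∑ i ∈ Icc 1 x, ∑ j ∈ Ioc x M, F i j = T := by
    rw [hsymm]
    have heach : ∀ i ∈ Ioc x M, ∑ j ∈ Icc 1 x, F i j
        = ∑ j ∈ Icc 1 M, F i j - ∑ j ∈ Ioc x M, F i j := by
      intro i hi
      have := hsplit (F i)
      linarith
    rw [Finset.sum_congr rfl heach, Finset.sum_sub_distrib, hIocrow, hvanish]
    ring
  have hS : ∑ i ∈ Icc 1 x, ∑ j ∈ Icc 1 x, F i j = HM - T - T := by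
    have heach : ∀ i ∈ Icc 1 x, ∑ j ∈ Icc 1 x, F i j
        = ∑ j ∈ Icc 1 M, F i j - ∑ j ∈ Ioc x M, F i j := by
      intro i hi
      have := hsplit (F i)
      linarith
    rw [Finset.sum_congr rfl heach, Finset.sum_sub_distrib, hIccxfull, hQ]
  rw [step0, hS, harmonic_real, harmonic_real, ← hHM]
  linarith

lemma gamma_bound (n : ℕ) (hn : 1 ≤ n) :
    |(harmonic n : ℝ) - Real.log n - Real.eulerMascheroniConstant| ≤ 1 / n := by
  have hn0 : (0 : ℝ) < n := by exact_mod_cast hn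
  have hlow : Real.eulerMascheroniConstant < (harmonic n : ℝ) - Real.log n := by
    have h := Real.eulerMascheroniConstant_lt_eulerMascheroniSeq' n
    rwa [Real.eulerMascheroniSeq', if_neg (by omega)] at h
  have hup : (harmonic n : ℝ) - Real.log ((n : ℝ) + 1) < Real.eulerMascheroniConstant := by
    have h := Real.eulerMascheroniSeq_lt_eulerMascheroniConstant n
    rwa [Real.eulerMascheroniSeq] at h
  have hlog : Real.log ((n : ℝ) + 1) - Real.log n ≤ 1 / n := by
    have h1 : Real.log (((n : ℝ) + 1) / n) ≤ ((n : ℝ) + 1) / n - 1 :=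
      Real.log_le_sub_one_of_pos (by positivity)
    rw [Real.log_div (by positivity) (by positivity)] at h1
    have h2 : ((n : ℝ) + 1) / n - 1 = 1 / n := by field_simp; ring
    linarith
  rw [abs_le]
  constructor
  · linarith
  · linarith

theorem stmt_7 :
    ∃ C : ℝ, 0 < C ∧ ∃ x₁ : ℕ, ∀ x : ℕ, x₁ ≤ x →
      |(∑ i ∈ Finset.Icc 1 x, ∑ j ∈ Finset.Icc 1 x,
          (1 / ((i : ℝ) * (j : ℝ))) * mSum (x ^ 2 / (i * j))) -
        Real.eulerMascheroniConstant| ≤ C / x := by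
  refine ⟨3, by norm_num, 1, fun x hx => ?_⟩
  have hx1 : (1 : ℝ) ≤ (x : ℝ) := by exact_mod_cast hx
  have hx0 : (0 : ℝ) < (x : ℝ) := by linarith
  rw [key_identity x hx]
  have h1 := abs_le.1 (gamma_bound x hx)
  have h2 := abs_le.1 (gamma_bound (x ^ 2) (Nat.one_le_pow _ _ (by omega)))
  have hlog : Real.log ((x ^ 2 : ℕ) : ℝ) = 2 * Real.log x := by
    push_cast
    rw [Real.log_pow]
    norm_num
  rw [hlog] at h2
  have hcast : ((x ^ 2 : ℕ) : ℝ) = (x : ℝ) ^ 2 := by push_cast; ring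
  rw [hcast] at h2
  have hle : 1 / (x : ℝ) ^ 2 ≤ 1 / (x : ℝ) := by
    apply one_div_le_one_div_of_le hx0
    nlinarith
  have h3x : (3 : ℝ) / x = 1 / x + 1 / x + 1 / x := by ring
  rw [abs_le, h3x]
  constructor
  · linarith
  · linarith
end

section
/- The limit, as the positive integer x tends to infinity, of ∑_{i=1}^{x} ∑_{j=1}^{x} (1/(i·j)) · m_{⌊x²/(i·j)⌋} exists and equals Euler's constant γ, where m_n = ∑_{k=1}^{n} μ(k)/k. -/
open Finset ArithmeticFunction Filter

noncomputable def Hsum (n : ℕ) : ℝ := ∑ i ∈ Finset.Icc 1 n, (1 : ℝ) / (i : ℝ)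

lemma pair_sum (y : ℕ) (s : Finset ℕ) (hs : s ⊆ Finset.Icc 1 y) (f : ℕ × ℕ → ℝ) :
    ∑ p ∈ (s ×ˢ Finset.Icc 1 y).filter (fun p => p.1 * p.2 ≤ y), f p
      = ∑ i ∈ s, ∑ j ∈ Finset.Icc 1 (y / i), f (i, j) := by
  rw [Finset.sum_filter, Finset.sum_product]
  refine Finset.sum_congr rfl fun i hi => ?_
  have h1 : 1 ≤ i := (Finset.mem_Icc.1 (hs hi)).1
  rw [← Finset.sum_filter]
  apply Finset.sum_congr _ (fun _ _ => rfl)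
  ext j
  simp only [Finset.mem_filter, Finset.mem_Icc]
  constructor
  · rintro ⟨⟨hj1, _⟩, hj3⟩
    exact ⟨hj1, (Nat.le_div_iff_mul_le (by omega)).2 (by rwa [mul_comm])⟩
  · rintro ⟨hj1, hj2⟩
    have := (Nat.le_div_iff_mul_le (show 0 < i by omega)).1 hj2
    refine ⟨⟨hj1, ?_⟩, by rwa [mul_comm] at this⟩
    calc j ≤ j * i := Nat.le_mul_of_pos_right _ (by omega)
    _ ≤ y := this

lemma fiber_eq (y m : ℕ) (hm1 : 1 ≤ m) (hm2 : m ≤ y) :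
    ((Finset.Icc 1 y ×ˢ Finset.Icc 1 y).filter
        (fun p : ℕ × ℕ => p.1 * p.2 ≤ y)).filter (fun p => p.1 * p.2 = m)
      = m.divisorsAntidiagonal := by
  ext p
  simp only [Finset.mem_filter, Finset.mem_product, Finset.mem_Icc,
    Nat.mem_divisorsAntidiagonal]
  constructor
  · rintro ⟨⟨h, hle⟩, hpm⟩
    exact ⟨hpm, by omega⟩
  · rintro ⟨hpm, -⟩
    have h2 : 1 ≤ p.2 := by
      rcases Nat.eq_zero_or_pos p.2 with h | h
      · exfalso; rw [h, mul_zero] at hpm; omega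
      · omega
    have h1 : 1 ≤ p.1 := by
      rcases Nat.eq_zero_or_pos p.1 with h | h
      · exfalso; rw [h, zero_mul] at hpm; omega
      · omega
    have hp1 : p.1 ≤ m := hpm ▸ Nat.le_mul_of_pos_right _ (by omega)
    have hp2 : p.2 ≤ m := hpm ▸ Nat.le_mul_of_pos_left _ (by omega)
    have hley : p.1 * p.2 ≤ y := by omega
    exact ⟨⟨⟨⟨h1, by omega⟩, h2, by omega⟩, hley⟩, hpm⟩

lemma mertens_one (y : ℕ) (hy : 1 ≤ y) :
    ∑ j ∈ Finset.Icc 1 y, (1 / (j : ℝ)) * mSum (y / j) = 1 := by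
  have key : ∑ p ∈ (Finset.Icc 1 y ×ˢ Finset.Icc 1 y).filter (fun p => p.1 * p.2 ≤ y),
      ((1 : ℝ) / (p.1 : ℝ)) * ((moebius p.2 : ℝ) / (p.2 : ℝ))
      = ∑ j ∈ Finset.Icc 1 y, (1 / (j : ℝ)) * mSum (y / j) := by
    rw [pair_sum y _ (le_refl _)]
    refine Finset.sum_congr rfl fun j hj => ?_
    rw [mSum, Finset.mul_sum]
  rw [← key]
  rw [← Finset.sum_fiberwise_of_maps_to (g := fun p : ℕ × ℕ => p.1 * p.2)
    (t := Finset.Icc 1 y) ?_]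
  · have inner : ∀ m ∈ Finset.Icc 1 y,
        (∑ p ∈ ((Finset.Icc 1 y ×ˢ Finset.Icc 1 y).filter
            (fun p => p.1 * p.2 ≤ y)).filter (fun p => p.1 * p.2 = m),
          ((1 : ℝ) / (p.1 : ℝ)) * ((moebius p.2 : ℝ) / (p.2 : ℝ)))
          = (if m = 1 then (1:ℝ) else 0) / m := by
      intro m hm
      rw [Finset.mem_Icc] at hm
      rw [fiber_eq y m hm.1 hm.2]
      rw [Nat.sum_divisorsAntidiagonal'
        (f := fun i j => ((1 : ℝ) / (i : ℝ)) * ((moebius j : ℝ) / (j : ℝ))) (n := m)]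
      have hterm : ∀ k ∈ m.divisors,
          ((1 : ℝ) / ((m / k : ℕ) : ℝ)) * ((moebius k : ℝ) / (k : ℝ))
            = (moebius k : ℝ) / m := by
        intro k hk
        rw [Nat.mem_divisors] at hk
        have hmul : ((m / k : ℕ) : ℝ) * (k : ℝ) = (m : ℝ) := by
          rw [← Nat.cast_mul, Nat.div_mul_cancel hk.1]
        rw [div_mul_div_comm, one_mul, hmul]
      rw [Finset.sum_congr rfl hterm, ← Finset.sum_div]
      congr 1
      have hmoeb : (∑ k ∈ m.divisors, (moebius k : ℤ)) = if m = 1 then 1 else 0 := by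
        have h1 : ((moebius * ((ArithmeticFunction.zeta : ArithmeticFunction ℕ) : ArithmeticFunction ℤ) : ArithmeticFunction ℤ)) m
            = ∑ k ∈ m.divisors, (moebius k : ℤ) := ArithmeticFunction.coe_mul_zeta_apply
        rw [ArithmeticFunction.moebius_mul_coe_zeta] at h1
        rw [← h1, ArithmeticFunction.one_apply]
      have hcast : (∑ k ∈ m.divisors, (moebius k : ℝ))
          = ((∑ k ∈ m.divisors, (moebius k : ℤ) : ℤ) : ℝ) := by
        push_cast; rfl
      rw [hcast, hmoeb]
      split_ifs <;> simp
    rw [Finset.sum_congr rfl inner]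
    have hite : ∀ m ∈ Finset.Icc 1 y, (if m = 1 then (1:ℝ) else 0) / m
        = if m = 1 then (1:ℝ) else 0 := by
      intro m hm; split_ifs with h
      · rw [h]; norm_num
      · simp
    rw [Finset.sum_congr rfl hite, Finset.sum_ite_eq' (Finset.Icc 1 y) 1 (fun _ => (1:ℝ))]
    simp [hy]
  · intro p hp
    simp only [Finset.mem_filter, Finset.mem_product, Finset.mem_Icc] at hp
    rw [Finset.mem_Icc]
    refine ⟨?_, hp.2⟩
    have := hp.1.1.1; have := hp.1.2.1
    calc 1 ≤ p.1 := by omega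
    _ ≤ p.1 * p.2 := Nat.le_mul_of_pos_right _ (by omega)

lemma row_sum (y : ℕ) (s : Finset ℕ) (hs : s ⊆ Finset.Icc 1 y) :
    ∑ p ∈ (s ×ˢ Finset.Icc 1 y).filter (fun p => p.1 * p.2 ≤ y),
        (1 / ((p.1 : ℝ) * (p.2 : ℝ))) * mSum (y / (p.1 * p.2))
      = ∑ i ∈ s, (1 : ℝ) / (i : ℝ) := by
  rw [pair_sum y s hs]
  refine Finset.sum_congr rfl fun i hi => ?_
  have hi' := Finset.mem_Icc.1 (hs hi)
  have hyi : 1 ≤ y / i := (Nat.le_div_iff_mul_le (by omega)).2 (by omega)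
  have hterm : ∀ j ∈ Finset.Icc 1 (y / i),
      (1 / ((i : ℝ) * (j : ℝ))) * mSum (y / (i * j))
        = (1 / (i : ℝ)) * ((1 / (j : ℝ)) * mSum ((y / i) / j)) := by
    intro j hj
    rw [Nat.div_div_eq_div_mul]
    ring
  rw [Finset.sum_congr rfl hterm, ← Finset.mul_sum, mertens_one _ hyi, mul_one]

lemma regionA (x N : ℕ) (hx : 1 ≤ x) (hN : N = x ^ 2) (hxN : x ≤ N) :
    (((Finset.Icc 1 N ×ˢ Finset.Icc 1 N).filter (fun p => p.1 * p.2 ≤ N)).filter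
        (fun p => p.1 ≤ x)).filter (fun p => p.2 ≤ x)
      = Finset.Icc 1 x ×ˢ Finset.Icc 1 x := by
  ext p
  simp only [Finset.mem_filter, Finset.mem_product, Finset.mem_Icc]
  constructor
  · rintro ⟨⟨⟨⟨⟨h1, _⟩, h2, _⟩, _⟩, h3⟩, h4⟩
    exact ⟨⟨h1, h3⟩, h2, h4⟩
  · rintro ⟨⟨h1, h2⟩, h3, h4⟩
    have hmul : p.1 * p.2 ≤ N := by
      calc p.1 * p.2 ≤ x * x := Nat.mul_le_mul h2 h4
      _ = N := by rw [hN]; ring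
    exact ⟨⟨⟨⟨⟨h1, by omega⟩, h3, by omega⟩, hmul⟩, h2⟩, h4⟩

lemma regionB (x N : ℕ) :
    ((Finset.Icc 1 N ×ˢ Finset.Icc 1 N).filter (fun p => p.1 * p.2 ≤ N)).filter
        (fun p => ¬ p.1 ≤ x)
      = (Finset.Icc (x + 1) N ×ˢ Finset.Icc 1 N).filter (fun p => p.1 * p.2 ≤ N) := by
  ext p
  simp only [Finset.mem_filter, Finset.mem_product, Finset.mem_Icc, not_le]
  constructor
  · rintro ⟨⟨⟨⟨h1, h2⟩, h3, h4⟩, h5⟩, h6⟩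
    exact ⟨⟨⟨by omega, h2⟩, h3, h4⟩, h5⟩
  · rintro ⟨⟨⟨h1, h2⟩, h3, h4⟩, h5⟩
    exact ⟨⟨⟨⟨by omega, h2⟩, h3, h4⟩, h5⟩, by omega⟩

lemma regionC (x N : ℕ) (hx : 1 ≤ x) (hN : N = x ^ 2) (F : ℕ × ℕ → ℝ)
    (hF : F = fun p => (1 / ((p.1 : ℝ) * (p.2 : ℝ))) * mSum (N / (p.1 * p.2))) :
    ∑ p ∈ (((Finset.Icc 1 N ×ˢ Finset.Icc 1 N).filter (fun p => p.1 * p.2 ≤ N)).filter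
        (fun p => p.1 ≤ x)).filter (fun p => ¬ p.2 ≤ x), F p
      = ∑ p ∈ ((Finset.Icc 1 N ×ˢ Finset.Icc 1 N).filter (fun p => p.1 * p.2 ≤ N)).filter
        (fun p => ¬ p.1 ≤ x), F p := by
  subst hF
  refine Finset.sum_nbij' (fun p => Prod.swap p) (fun p => Prod.swap p) ?_ ?_ ?_ ?_ ?_
  · intro p hp
    simp only [Finset.mem_filter, Finset.mem_product, Finset.mem_Icc, not_le,
      Prod.fst_swap, Prod.snd_swap] at hp ⊢
    obtain ⟨⟨⟨⟨⟨h1, h2⟩, h3, h4⟩, h5⟩, h6⟩, h7⟩ := hp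
    rw [mul_comm] at h5
    exact ⟨⟨⟨⟨h3, h4⟩, h1, h2⟩, h5⟩, by omega⟩
  · intro p hp
    simp only [Finset.mem_filter, Finset.mem_product, Finset.mem_Icc, not_le,
      Prod.fst_swap, Prod.snd_swap] at hp ⊢
    obtain ⟨⟨⟨⟨h1, h2⟩, h3, h4⟩, h5⟩, h6⟩ := hp
    have hp2x : p.2 ≤ x := by
      by_contra hcon
      push_neg at hcon
      have hge : (x + 1) * (x + 1) ≤ p.1 * p.2 := Nat.mul_le_mul (by omega) (by omega)
      have hlt : x * x < (x + 1) * (x + 1) := by nlinarith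
      have hNx : N = x * x := by rw [hN]; ring
      omega
    rw [mul_comm] at h5
    exact ⟨⟨⟨⟨⟨h3, h4⟩, h1, h2⟩, h5⟩, hp2x⟩, by omega⟩
  · intro p _; exact Prod.swap_swap p
  · intro p _; exact Prod.swap_swap p
  · intro p _
    simp only [Prod.fst_swap, Prod.snd_swap]
    rw [mul_comm (p.2 : ℝ) (p.1 : ℝ), mul_comm p.2 p.1]

lemma main_identity (x : ℕ) (hx : 1 ≤ x) :
    ∑ i ∈ Finset.Icc 1 x, ∑ j ∈ Finset.Icc 1 x,
        (1 / ((i : ℝ) * (j : ℝ))) * mSum (x ^ 2 / (i * j))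
      = 2 * Hsum x - Hsum (x ^ 2) := by
  have hxN : x ≤ x ^ 2 := Nat.le_self_pow two_ne_zero x
  set F : ℕ × ℕ → ℝ :=
    fun p => (1 / ((p.1 : ℝ) * (p.2 : ℝ))) * mSum (x ^ 2 / (p.1 * p.2)) with hF
  have hfull : ∑ p ∈ (Finset.Icc 1 (x ^ 2) ×ˢ Finset.Icc 1 (x ^ 2)).filter
      (fun p => p.1 * p.2 ≤ x ^ 2), F p = Hsum (x ^ 2) := row_sum (x ^ 2) _ (le_refl _)
  set P := (Finset.Icc 1 (x ^ 2) ×ˢ Finset.Icc 1 (x ^ 2)).filter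
      (fun p => p.1 * p.2 ≤ x ^ 2) with hP
  have hsplit1 : ∑ p ∈ P, F p
      = ∑ p ∈ P.filter (fun p => p.1 ≤ x), F p
        + ∑ p ∈ P.filter (fun p => ¬ p.1 ≤ x), F p :=
    (Finset.sum_filter_add_sum_filter_not P _ F).symm
  have hsplit2 : ∑ p ∈ P.filter (fun p => p.1 ≤ x), F p
      = ∑ p ∈ (P.filter (fun p => p.1 ≤ x)).filter (fun p => p.2 ≤ x), F p
        + ∑ p ∈ (P.filter (fun p => p.1 ≤ x)).filter (fun p => ¬ p.2 ≤ x), F p :=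
    (Finset.sum_filter_add_sum_filter_not _ _ F).symm
  have hBsum : ∑ p ∈ P.filter (fun p => ¬ p.1 ≤ x), F p
      = Hsum (x ^ 2) - Hsum x := by
    rw [hP, regionB x (x ^ 2), hF]
    rw [row_sum (x ^ 2) (Finset.Icc (x + 1) (x ^ 2)) (fun a ha => by
      rw [Finset.mem_Icc] at *; omega)]
    have hIcc : Finset.Icc 1 (x ^ 2) = Finset.Icc 1 x ∪ Finset.Icc (x + 1) (x ^ 2) := by
      ext a; simp only [Finset.mem_Icc, Finset.mem_union]; omega
    have hdisj : Disjoint (Finset.Icc 1 x) (Finset.Icc (x + 1) (x ^ 2)) := by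
      rw [Finset.disjoint_left]
      intro a ha hb
      rw [Finset.mem_Icc] at *; omega
    have hun : Hsum (x ^ 2) = Hsum x + ∑ i ∈ Finset.Icc (x + 1) (x ^ 2), (1 : ℝ) / i := by
      rw [Hsum, hIcc, Finset.sum_union hdisj]; rfl
    rw [hun]; ring
  have hCsum : ∑ p ∈ (P.filter (fun p => p.1 ≤ x)).filter (fun p => ¬ p.2 ≤ x), F p
      = ∑ p ∈ P.filter (fun p => ¬ p.1 ≤ x), F p := by
    rw [hP]
    exact regionC x (x ^ 2) hx rfl F hF
  have hAset : (P.filter (fun p => p.1 ≤ x)).filter (fun p => p.2 ≤ x)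
      = Finset.Icc 1 x ×ˢ Finset.Icc 1 x := by
    rw [hP]; exact regionA x (x ^ 2) hx rfl hxN
  have hS : ∑ p ∈ Finset.Icc 1 x ×ˢ Finset.Icc 1 x, F p
      = ∑ i ∈ Finset.Icc 1 x, ∑ j ∈ Finset.Icc 1 x,
          (1 / ((i : ℝ) * (j : ℝ))) * mSum (x ^ 2 / (i * j)) := by
    rw [Finset.sum_product]
  rw [← hS]
  rw [hsplit1, hsplit2, hAset, hCsum, hBsum] at hfull
  linarith

lemma Hsum_eq (n : ℕ) : Hsum n = (harmonic n : ℝ) := by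
  rw [Hsum, harmonic_eq_sum_Icc]
  push_cast
  refine Finset.sum_congr rfl fun i _ => ?_
  rw [one_div]

theorem stmt_8 :
    Tendsto (fun x : ℕ => ∑ i ∈ Finset.Icc 1 x, ∑ j ∈ Finset.Icc 1 x,
        (1 / ((i : ℝ) * (j : ℝ))) * mSum (x ^ 2 / (i * j)))
      atTop (nhds Real.eulerMascheroniConstant) := by
  have hsq : Tendsto (fun x : ℕ => x ^ 2) atTop atTop :=
    tendsto_atTop_mono (fun n => Nat.le_self_pow two_ne_zero n) tendsto_id
  have h1 : Tendsto (fun x : ℕ => ((harmonic x : ℝ) - Real.log x)) atTop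
      (nhds Real.eulerMascheroniConstant) := Real.tendsto_harmonic_sub_log
  have h2 : Tendsto (fun x : ℕ => ((harmonic (x ^ 2) : ℝ) - Real.log ((x ^ 2 : ℕ) : ℝ))) atTop
      (nhds Real.eulerMascheroniConstant) := h1.comp hsq
  have h3 : Tendsto (fun x : ℕ => 2 * ((harmonic x : ℝ) - Real.log x)
      - ((harmonic (x ^ 2) : ℝ) - Real.log ((x ^ 2 : ℕ) : ℝ))) atTop
      (nhds (2 * Real.eulerMascheroniConstant - Real.eulerMascheroniConstant)) :=
    (h1.const_mul 2).sub h2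
  have heq : (2 : ℝ) * Real.eulerMascheroniConstant - Real.eulerMascheroniConstant
      = Real.eulerMascheroniConstant := by ring
  rw [heq] at h3
  apply h3.congr'
  filter_upwards [eventually_ge_atTop 1] with x hx
  rw [main_identity x hx, Hsum_eq, Hsum_eq]
  have hlog : Real.log ((x ^ 2 : ℕ) : ℝ) = 2 * Real.log x := by
    push_cast
    rw [Real.log_pow]
    push_cast; ring
  rw [hlog]
  ring
end

section
/- For every real number s and every positive integer x, ∑_{i=1}^{x} (μ(i)/i^s) · ∑_{j=x+1}^{x²} (μ(j)/j^s) · H_{⌊x²/(i·j)⌋}(s) = M_{x}(s) − ∑_{i=1}^{x} ∑_{j=1}^{x} (μ(i)·μ(j)/(i·j)^s) · H_{⌊x²/(i·j)⌋}(s). -/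
open Finset ArithmeticFunction

lemma key_s10 (s : ℝ) (n : ℕ) (hn : 1 ≤ n) :
    ∑ j ∈ Finset.Icc 1 n, ((moebius j : ℝ) / (j : ℝ) ^ s) * Hgen s (n / j) = 1 := by
  unfold Hgen
  simp_rw [Finset.mul_sum]
  rw [Finset.sum_sigma']
  have h2 : ∑ m ∈ Finset.Icc 1 n, ∑ p ∈ m.divisorsAntidiagonal,
      ((moebius p.1 : ℝ) / (p.1 : ℝ) ^ s * (1 / (p.2 : ℝ) ^ s)) = 1 := by
    have hterm : ∀ m ∈ Finset.Icc 1 n, ∑ p ∈ m.divisorsAntidiagonal,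
        ((moebius p.1 : ℝ) / (p.1 : ℝ) ^ s * (1 / (p.2 : ℝ) ^ s))
        = if m = 1 then 1 / (m : ℝ) ^ s else 0 := by
      intro m hm
      have key2 : ∀ p ∈ m.divisorsAntidiagonal,
          ((moebius p.1 : ℝ) / (p.1 : ℝ) ^ s * (1 / (p.2 : ℝ) ^ s))
          = (moebius p.1 : ℝ) / (m : ℝ) ^ s := by
        intro p hp
        obtain ⟨hpm, hm0⟩ := Nat.mem_divisorsAntidiagonal.mp hp
        have h : ((p.1 : ℝ)) ^ s * (p.2 : ℝ) ^ s = (m : ℝ) ^ s := by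
          rw [← Real.mul_rpow (by positivity) (by positivity), ← Nat.cast_mul, hpm]
        rw [div_mul_div_comm, mul_one, h]
      rw [Finset.sum_congr rfl key2, ← Finset.sum_div]
      rw [Nat.sum_divisorsAntidiagonal (fun a b => (moebius a : ℝ))]
      have hZ : ∑ d ∈ m.divisors, moebius d = if m = 1 then 1 else 0 := by
        have h : (moebius * ((ArithmeticFunction.zeta : ArithmeticFunction ℕ) : ArithmeticFunction ℤ) : ArithmeticFunction ℤ) m = (1 : ArithmeticFunction ℤ) m := by
          rw [moebius_mul_coe_zeta]
        rwa [coe_mul_zeta_apply, one_apply] at h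
      have hcast : ∑ d ∈ m.divisors, (moebius d : ℝ)
          = ((∑ d ∈ m.divisors, moebius d : ℤ) : ℝ) := by push_cast; rfl
      rw [hcast, hZ]
      split_ifs <;> simp
    rw [Finset.sum_congr rfl hterm, Finset.sum_ite_eq' (Finset.Icc 1 n) 1
      (fun m => 1 / (m : ℝ) ^ s)]
    simp [hn]
  rw [Finset.sum_sigma'] at h2
  refine Eq.trans ?_ h2
  refine Finset.sum_nbij' (fun p => ⟨p.1 * p.2, (p.1, p.2)⟩) (fun q => ⟨q.2.1, q.2.2⟩)
    ?_ ?_ ?_ ?_ ?_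
  · rintro ⟨j, k⟩ hp
    obtain ⟨hj, hk⟩ := Finset.mem_sigma.mp hp
    obtain ⟨hj1, hjn⟩ := Finset.mem_Icc.mp hj
    obtain ⟨hk1, hkn⟩ := Finset.mem_Icc.mp hk
    dsimp only at *
    refine Finset.mem_sigma.mpr ⟨Finset.mem_Icc.mpr ⟨Nat.one_le_iff_ne_zero.mpr
      (by positivity), ?_⟩, Nat.mem_divisorsAntidiagonal.mpr ⟨rfl, by positivity⟩⟩
    calc j * k = k * j := Nat.mul_comm _ _
    _ ≤ n := (Nat.le_div_iff_mul_le (by omega)).mp hkn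
  · rintro ⟨m, a, b⟩ hq
    obtain ⟨hm, hab⟩ := Finset.mem_sigma.mp hq
    obtain ⟨hm1, hmn⟩ := Finset.mem_Icc.mp hm
    obtain ⟨habm, hm0⟩ := Nat.mem_divisorsAntidiagonal.mp hab
    dsimp only at *
    have ha : 0 < a := by
      rcases Nat.eq_zero_or_pos a with h | h
      · subst h; simp at habm; omega
      · exact h
    have hb : 0 < b := by
      rcases Nat.eq_zero_or_pos b with h | h
      · subst h; simp at habm; omega
      · exact h
    refine Finset.mem_sigma.mpr ⟨Finset.mem_Icc.mpr ⟨ha, ?_⟩, Finset.mem_Icc.mpr ⟨hb, ?_⟩⟩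
    · calc a ≤ a * b := Nat.le_mul_of_pos_right a hb
      _ = m := habm
      _ ≤ n := hmn
    · refine (Nat.le_div_iff_mul_le ha).mpr ?_
      rw [Nat.mul_comm, habm]; exact hmn
  · rintro ⟨j, k⟩ _; rfl
  · rintro ⟨m, a, b⟩ hq
    obtain ⟨hm, hab⟩ := Finset.mem_sigma.mp hq
    obtain ⟨habm, hm0⟩ := Nat.mem_divisorsAntidiagonal.mp hab
    dsimp only at *
    simp [habm]
  · rintro ⟨j, k⟩ _; rfl

lemma trunc (s : ℝ) (x i : ℕ) (hi1 : 1 ≤ i) (hix : i ≤ x) :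
    ∑ j ∈ Finset.Icc 1 (x ^ 2), ((moebius j : ℝ) / (j : ℝ) ^ s) *
      Hgen s (x ^ 2 / (i * j)) = 1 := by
  have hix2 : i ≤ x ^ 2 := le_trans hix (Nat.le_self_pow two_ne_zero x)
  have hN1 : 1 ≤ x ^ 2 / i := by
    rw [Nat.le_div_iff_mul_le (by omega)]
    omega
  have hsub : Finset.Icc 1 (x ^ 2 / i) ⊆ Finset.Icc 1 (x ^ 2) :=
    Finset.Icc_subset_Icc_right (Nat.div_le_self _ _)
  have hzero : ∀ j ∈ Finset.Icc 1 (x ^ 2), j ∉ Finset.Icc 1 (x ^ 2 / i) →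
      ((moebius j : ℝ) / (j : ℝ) ^ s) * Hgen s (x ^ 2 / (i * j)) = 0 := by
    intro j hj hj'
    simp only [Finset.mem_Icc] at hj hj'
    have hlt : x ^ 2 / i < j := by omega
    have h0 : x ^ 2 / (i * j) = 0 := by
      rw [← Nat.div_div_eq_div_mul]
      exact Nat.div_eq_of_lt hlt
    simp [h0, Hgen]
  rw [← Finset.sum_subset hsub hzero]
  rw [Finset.sum_congr rfl (fun j _ => by rw [← Nat.div_div_eq_div_mul])]
  exact key_s10 s (x ^ 2 / i) hN1

theorem stmt_10 (s : ℝ) (x : ℕ) (hx : 0 < x) :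
    ∑ i ∈ Finset.Icc 1 x, ((moebius i : ℝ) / (i : ℝ) ^ s) *
      ∑ j ∈ Finset.Icc (x + 1) (x ^ 2), ((moebius j : ℝ) / (j : ℝ) ^ s) *
        Hgen s (x ^ 2 / (i * j)) =
    Mgen s x -
      ∑ i ∈ Finset.Icc 1 x, ∑ j ∈ Finset.Icc 1 x,
        ((moebius i : ℝ) * (moebius j : ℝ) / ((i : ℝ) * (j : ℝ)) ^ s) *
          Hgen s (x ^ 2 / (i * j)) := by
  have hsplit : ∀ i ∈ Finset.Icc 1 x,
      ∑ j ∈ Finset.Icc (x + 1) (x ^ 2), ((moebius j : ℝ) / (j : ℝ) ^ s) *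
        Hgen s (x ^ 2 / (i * j))
      = 1 - ∑ j ∈ Finset.Icc 1 x, ((moebius j : ℝ) / (j : ℝ) ^ s) *
        Hgen s (x ^ 2 / (i * j)) := by
    intro i hi
    obtain ⟨hi1, hix⟩ := Finset.mem_Icc.mp hi
    have hxx : x ≤ x ^ 2 := Nat.le_self_pow two_ne_zero x
    have hcons := Finset.sum_Ioc_consecutive
      (f := fun j => ((moebius j : ℝ) / (j : ℝ) ^ s) * Hgen s (x ^ 2 / (i * j)))
      (Nat.zero_le x) hxx
    have e1 : Finset.Icc 1 x = Finset.Ioc 0 x := by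
      rw [← Finset.Icc_add_one_left_eq_Ioc, zero_add]
    have e2 : Finset.Icc (x + 1) (x ^ 2) = Finset.Ioc x (x ^ 2) := by
      rw [← Finset.Icc_add_one_left_eq_Ioc]
    have e3 : Finset.Icc 1 (x ^ 2) = Finset.Ioc 0 (x ^ 2) := by
      rw [← Finset.Icc_add_one_left_eq_Ioc, zero_add]
    have ht := trunc s x i hi1 hix
    rw [e3] at ht
    rw [e1, e2]
    linarith [hcons]
  rw [Finset.sum_congr rfl (fun i hi => by rw [hsplit i hi])]
  simp_rw [mul_sub, mul_one, Finset.sum_sub_distrib]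
  unfold Mgen
  congr 1
  refine Finset.sum_congr rfl fun i hi => ?_
  rw [Finset.mul_sum]
  refine Finset.sum_congr rfl fun j hj => ?_
  obtain ⟨hi1, _⟩ := Finset.mem_Icc.mp hi
  obtain ⟨hj1, _⟩ := Finset.mem_Icc.mp hj
  rw [Real.mul_rpow (by positivity) (by positivity)]
  ring
end

section
/- For every real number s and every positive integer x, M_{x²}(s) = 2·M_{x}(s) − ∑_{i=1}^{x} ∑_{j=1}^{x} (μ(i)·μ(j)/(i·j)^s) · H_{⌊x²/(i·j)⌋}(s). -/
open Finset ArithmeticFunction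

lemma moebius_divisor_sum_int {n : ℕ} (hn : 2 ≤ n) :
    ∑ d ∈ n.divisors, (moebius d : ℤ) = 0 := by
  have h := ArithmeticFunction.coe_mul_zeta_apply (R := ℤ) (f := (moebius : ArithmeticFunction ℤ)) (x := n)
  rw [ArithmeticFunction.moebius_mul_coe_zeta] at h
  rw [← h, ArithmeticFunction.one_apply, if_neg (by omega)]

lemma Hgen_succ (s : ℝ) (m : ℕ) :
    Hgen s (m + 1) = Hgen s m + 1 / ((m + 1 : ℕ) : ℝ) ^ s := by
  unfold Hgen
  rw [Finset.sum_Icc_succ_top (by omega)]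

lemma Hgen_one (s : ℝ) : Hgen s 1 = 1 := by
  simp [Hgen, Real.one_rpow]

lemma keyK (s : ℝ) : ∀ y : ℕ, 1 ≤ y →
    ∑ b ∈ Finset.Icc 1 y, (moebius b : ℝ) / (b : ℝ) ^ s * Hgen s (y / b) = 1 := by
  intro y hy
  induction y, hy using Nat.le_induction with
  | base => simp [Hgen_one, Real.one_rpow]
  | succ y hy ih =>
    rw [Finset.sum_Icc_succ_top (by omega)]
    have hstep : ∀ b ∈ Finset.Icc 1 y,
        (moebius b : ℝ) / (b : ℝ) ^ s * Hgen s ((y + 1) / b)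
        = (moebius b : ℝ) / (b : ℝ) ^ s * Hgen s (y / b)
          + (if b ∣ y + 1 then
              (moebius b : ℝ) / (b : ℝ) ^ s * (1 / (((y + 1) / b : ℕ) : ℝ) ^ s) else 0) := by
      intro b hb
      by_cases hdvd : b ∣ y + 1
      · rw [if_pos hdvd]
        have h1 : (y + 1) / b = y / b + 1 := Nat.succ_div_of_dvd hdvd
        rw [h1, Hgen_succ, ← h1]
        ring
      · rw [if_neg hdvd, Nat.succ_div_of_not_dvd hdvd, add_zero]
    rw [Finset.sum_congr rfl hstep, Finset.sum_add_distrib, ih]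
    -- the correction sum plus the top term
    have htop : (moebius (y + 1) : ℝ) / ((y + 1 : ℕ) : ℝ) ^ s * Hgen s ((y + 1) / (y + 1))
        = (if (y + 1) ∣ y + 1 then
            (moebius (y + 1) : ℝ) / ((y + 1 : ℕ) : ℝ) ^ s
              * (1 / (((y + 1) / (y + 1) : ℕ) : ℝ) ^ s) else 0) := by
      rw [if_pos dvd_rfl, Nat.div_self (by omega), Hgen_one]
      norm_num [Real.one_rpow]
    rw [htop, add_assoc, ← Finset.sum_Icc_succ_top (a := 1) (b := y)
        (f := fun b => if b ∣ y + 1 then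
        (moebius b : ℝ) / (b : ℝ) ^ s * (1 / (((y + 1) / b : ℕ) : ℝ) ^ s) else 0) (by omega)]
    have hfilter : Finset.filter (· ∣ y + 1) (Finset.Icc 1 (y + 1)) = (y + 1).divisors := by
      ext d
      simp only [Finset.mem_filter, Finset.mem_Icc, Nat.mem_divisors]
      constructor
      · rintro ⟨⟨_, _⟩, hd⟩; exact ⟨hd, Nat.succ_ne_zero y⟩
      · rintro ⟨hd, _⟩
        exact ⟨⟨Nat.pos_of_dvd_of_pos hd (Nat.succ_pos y),
          Nat.le_of_dvd (Nat.succ_pos y) hd⟩, hd⟩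
    rw [← Finset.sum_filter, hfilter]
    have hterm : ∀ d ∈ (y + 1).divisors,
        (moebius d : ℝ) / (d : ℝ) ^ s * (1 / (((y + 1) / d : ℕ) : ℝ) ^ s)
        = (moebius d : ℝ) / ((y + 1 : ℕ) : ℝ) ^ s := by
      intro d hd
      rw [Nat.mem_divisors] at hd
      have hd0 : 0 < d := Nat.pos_of_dvd_of_pos hd.1 (by omega)
      have hmul : ((d : ℝ)) * (((y + 1) / d : ℕ) : ℝ) = ((y + 1 : ℕ) : ℝ) := by
        rw [← Nat.cast_mul, Nat.mul_div_cancel' hd.1]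
      have hr : ((d : ℝ)) ^ s * (((y + 1) / d : ℕ) : ℝ) ^ s = ((y + 1 : ℕ) : ℝ) ^ s := by
        rw [← Real.mul_rpow (by positivity) (by positivity), hmul]
      rw [div_mul_div_comm, mul_one, hr]
    rw [Finset.sum_congr rfl hterm, ← Finset.sum_div]
    have : ∑ d ∈ (y + 1).divisors, (moebius d : ℝ) = 0 := by
      have := moebius_divisor_sum_int (n := y + 1) (by omega)
      exact_mod_cast congrArg (fun z : ℤ => (z : ℝ)) this
    rw [this]
    simp

theorem stmt_11 (s : ℝ) (x : ℕ) (hx : 0 < x) :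
    Mgen s (x ^ 2) = 2 * Mgen s x -
      ∑ i ∈ Finset.Icc 1 x, ∑ j ∈ Finset.Icc 1 x,
        ((moebius i : ℝ) * (moebius j : ℝ) / ((i : ℝ) * (j : ℝ)) ^ s) *
          Hgen s (x ^ 2 / (i * j)) := by
  set n := x ^ 2 with hn
  have hxn : x ≤ n := by
    have : x * 1 ≤ x * x := Nat.mul_le_mul_left x hx
    simpa [hn, sq] using this
  have hnx : n / x = x := by
    rw [hn, sq]
    exact Nat.mul_div_cancel_left x hx
  -- rewrite each term of the double sum
  have hterm : ∀ i ∈ Finset.Icc 1 x, ∀ j ∈ Finset.Icc 1 x,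
      ((moebius i : ℝ) * (moebius j : ℝ) / ((i : ℝ) * (j : ℝ)) ^ s) * Hgen s (n / (i * j))
      = (moebius i : ℝ) / (i : ℝ) ^ s *
          ((moebius j : ℝ) / (j : ℝ) ^ s * Hgen s (n / i / j)) := by
    intro i hi j hj
    rw [Finset.mem_Icc] at hi hj
    rw [Real.mul_rpow (by positivity) (by positivity), Nat.div_div_eq_div_mul]
    ring
  rw [Finset.sum_congr rfl (fun i hi => Finset.sum_congr rfl (hterm i hi))]
  -- inner sum over full range equals 1
  have hinner : ∀ i ∈ Finset.Icc 1 x,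
      ∑ j ∈ Finset.Icc 1 x, (moebius j : ℝ) / (j : ℝ) ^ s * Hgen s (n / i / j)
      = 1 - ∑ j ∈ Finset.Ioc x (n / i), (moebius j : ℝ) / (j : ℝ) ^ s * Hgen s (n / i / j) := by
    intro i hi
    rw [Finset.mem_Icc] at hi
    have hxni : x ≤ n / i := hnx ▸ Nat.div_le_div_left hi.2 hi.1
    have hK := keyK s (n / i) (le_trans hx hxni)
    have hsplit : ∑ j ∈ Finset.Ioc 0 x, (moebius j : ℝ) / (j : ℝ) ^ s * Hgen s (n / i / j)
        + ∑ j ∈ Finset.Ioc x (n / i), (moebius j : ℝ) / (j : ℝ) ^ s * Hgen s (n / i / j)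
        = ∑ j ∈ Finset.Ioc 0 (n / i), (moebius j : ℝ) / (j : ℝ) ^ s * Hgen s (n / i / j) :=
      Finset.sum_Ioc_consecutive _ (Nat.zero_le x) hxni
    have hIcc : ∀ m : ℕ, Finset.Icc 1 m = Finset.Ioc 0 m := fun m => by
      ext k; simp [Finset.mem_Icc, Finset.mem_Ioc]; omega
    rw [hIcc] at hK ⊢
    rw [← hK, ← hsplit]
    ring
  rw [Finset.sum_congr rfl (fun i hi => by rw [← Finset.mul_sum, hinner i hi])]
  have hMx : ∑ i ∈ Finset.Icc 1 x, (moebius i : ℝ) / (i : ℝ) ^ s * 1 = Mgen s x := by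
    simp [Mgen]
  -- expand: ∑ f i * (1 - g i) = Mx - U
  have hexp : ∑ i ∈ Finset.Icc 1 x, (moebius i : ℝ) / (i : ℝ) ^ s *
      (1 - ∑ j ∈ Finset.Ioc x (n / i), (moebius j : ℝ) / (j : ℝ) ^ s * Hgen s (n / i / j))
      = Mgen s x - ∑ i ∈ Finset.Icc 1 x, ∑ j ∈ Finset.Ioc x (n / i),
          (moebius i : ℝ) / (i : ℝ) ^ s *
            ((moebius j : ℝ) / (j : ℝ) ^ s * Hgen s (n / i / j)) := by
    rw [← hMx, ← Finset.sum_sub_distrib]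
    congr 1; ext i
    rw [← Finset.mul_sum]; ring
  rw [hexp]
  -- swap the double sum U
  have hswap : ∑ i ∈ Finset.Icc 1 x, ∑ j ∈ Finset.Ioc x (n / i),
      (moebius i : ℝ) / (i : ℝ) ^ s * ((moebius j : ℝ) / (j : ℝ) ^ s * Hgen s (n / i / j))
      = ∑ j ∈ Finset.Ioc x n, ∑ i ∈ Finset.Icc 1 (n / j),
        (moebius i : ℝ) / (i : ℝ) ^ s * ((moebius j : ℝ) / (j : ℝ) ^ s * Hgen s (n / i / j)) := by
    apply Finset.sum_comm'
    intro i j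
    simp only [Finset.mem_Icc, Finset.mem_Ioc]
    constructor
    · rintro ⟨⟨hi1, hix⟩, hxj, hjni⟩
      have hij : i * j ≤ n := by
        have h := (Nat.le_div_iff_mul_le hi1).mp hjni
        rwa [Nat.mul_comm] at h
      have hj1 : 0 < j := by omega
      refine ⟨⟨hi1, (Nat.le_div_iff_mul_le hj1).mpr hij⟩, hxj, ?_⟩
      calc j ≤ i * j := Nat.le_mul_of_pos_left j hi1
        _ ≤ n := hij
    · rintro ⟨⟨hi1, hinj⟩, hxj, hjn⟩
      have hj1 : 0 < j := by omega
      have hij : i * j ≤ n := (Nat.le_div_iff_mul_le hj1).mp hinj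
      have hix : i ≤ x := by
        by_contra h
        push_neg at h
        have : (x + 1) * (x + 1) ≤ i * j := Nat.mul_le_mul (by omega) (by omega)
        have : n < i * j := by
          calc n = x * x := by rw [hn, sq]
            _ < (x + 1) * (x + 1) := by nlinarith
            _ ≤ i * j := this
        omega
      exact ⟨⟨hi1, hix⟩, hxj, (Nat.le_div_iff_mul_le hi1).mpr (by rwa [Nat.mul_comm])⟩
  rw [hswap]
  -- inner sum over i equals μ j / j^s by keyK
  have hU : ∀ j ∈ Finset.Ioc x n,
      ∑ i ∈ Finset.Icc 1 (n / j),
        (moebius i : ℝ) / (i : ℝ) ^ s * ((moebius j : ℝ) / (j : ℝ) ^ s * Hgen s (n / i / j))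
      = (moebius j : ℝ) / (j : ℝ) ^ s := by
    intro j hj
    rw [Finset.mem_Ioc] at hj
    have hj1 : 0 < j := by omega
    have hnj : 1 ≤ n / j := (Nat.one_le_div_iff hj1).mpr hj.2
    have hrw : ∀ i : ℕ, n / i / j = n / j / i := by
      intro i; rw [Nat.div_div_eq_div_mul, Nat.div_div_eq_div_mul, Nat.mul_comm]
    calc ∑ i ∈ Finset.Icc 1 (n / j),
          (moebius i : ℝ) / (i : ℝ) ^ s * ((moebius j : ℝ) / (j : ℝ) ^ s * Hgen s (n / i / j))
        = (moebius j : ℝ) / (j : ℝ) ^ s * ∑ i ∈ Finset.Icc 1 (n / j),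
            (moebius i : ℝ) / (i : ℝ) ^ s * Hgen s (n / j / i) := by
          rw [Finset.mul_sum]
          congr 1; ext i
          rw [hrw]; ring
      _ = (moebius j : ℝ) / (j : ℝ) ^ s * 1 := by rw [keyK s (n / j) hnj]
      _ = (moebius j : ℝ) / (j : ℝ) ^ s := mul_one _
  rw [Finset.sum_congr rfl hU]
  -- ∑_{Ioc x n} μ j / j^s = Mgen s n - Mgen s x
  have htail : ∑ j ∈ Finset.Ioc x n, (moebius j : ℝ) / (j : ℝ) ^ s
      = Mgen s n - Mgen s x := by
    have hsplit : ∑ j ∈ Finset.Ioc 0 x, (moebius j : ℝ) / (j : ℝ) ^ s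
        + ∑ j ∈ Finset.Ioc x n, (moebius j : ℝ) / (j : ℝ) ^ s
        = ∑ j ∈ Finset.Ioc 0 n, (moebius j : ℝ) / (j : ℝ) ^ s :=
      Finset.sum_Ioc_consecutive _ (Nat.zero_le x) hxn
    have hIcc : ∀ m : ℕ, Finset.Icc 1 m = Finset.Ioc 0 m := fun m => by
      ext k; simp [Finset.mem_Icc, Finset.mem_Ioc]; omega
    unfold Mgen
    rw [hIcc, hIcc, ← hsplit]
    ring
  rw [htail]
  ring
end

section
/- For every positive integer x, m_{x²} = 2·m_{x} − ∑_{i=1}^{x} ∑_{j=1}^{x} (μ(i)·μ(j)/(i·j)) · H_{⌊x²/(i·j)⌋}, where m_n = ∑_{k=1}^{n} μ(k)/k and H_n = ∑_{k=1}^{n} 1/k. -/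
open Finset ArithmeticFunction

lemma sum_divisors_moebius_real (n : ℕ) :
    ∑ d ∈ n.divisors, (moebius d : ℝ) = if n = 1 then 1 else 0 := by
  have h : (moebius * (zeta : ArithmeticFunction ℤ)) n = (1 : ArithmeticFunction ℤ) n := by
    rw [moebius_mul_coe_zeta]
  rw [coe_mul_zeta_apply, one_apply] at h
  calc ∑ d ∈ n.divisors, (moebius d : ℝ)
      = ((∑ d ∈ n.divisors, moebius d : ℤ) : ℝ) := by push_cast; rfl
    _ = _ := by rw [h]; split_ifs <;> simp

/-- Key lemma: `∑_{d ≤ N} μ(d)/d · H(⌊N/d⌋) = 1` for `N ≥ 1`. -/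
lemma lemA (N : ℕ) (hN : 1 ≤ N) :
    ∑ d ∈ Finset.Icc 1 N, (moebius d : ℝ) / d * harmonicNum (N / d) = 1 := by
  have step1 : ∑ d ∈ Finset.Icc 1 N, (moebius d : ℝ) / d * harmonicNum (N / d)
      = ∑ p ∈ (Finset.Icc 1 N).sigma (fun d => Finset.Icc 1 (N / d)),
          (moebius p.1 : ℝ) / (p.1 * p.2) := by
    rw [Finset.sum_sigma]
    refine Finset.sum_congr rfl fun d _ => ?_
    rw [harmonicNum, Finset.mul_sum]
    refine Finset.sum_congr rfl fun m _ => ?_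
    rw [div_mul_div_comm, mul_one]
  have step2 : ∑ p ∈ (Finset.Icc 1 N).sigma (fun d => Finset.Icc 1 (N / d)),
        (moebius p.1 : ℝ) / (p.1 * p.2)
      = ∑ p ∈ (Finset.Icc 1 N).sigma (fun n => n.divisors), (moebius p.2 : ℝ) / p.1 := by
    refine Finset.sum_nbij' (fun p => ⟨p.1 * p.2, p.1⟩) (fun p => ⟨p.2, p.1 / p.2⟩) ?_ ?_ ?_ ?_ ?_
    · rintro ⟨d, m⟩ hp
      simp only [Finset.mem_sigma, Finset.mem_Icc, Nat.mem_divisors] at hp ⊢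
      obtain ⟨⟨hd1, hdN⟩, hm1, hmN⟩ := hp
      have hd0 : 0 < d := hd1
      refine ⟨⟨Nat.one_le_iff_ne_zero.mpr (by positivity), ?_⟩, dvd_mul_right d m, by positivity⟩
      calc d * m ≤ d * (N / d) := Nat.mul_le_mul_left d hmN
        _ ≤ N := Nat.mul_div_le N d
    · rintro ⟨n, d⟩ hp
      simp only [Finset.mem_sigma, Finset.mem_Icc, Nat.mem_divisors] at hp ⊢
      obtain ⟨⟨hn1, hnN⟩, hdn, hn0⟩ := hp
      have hd0 : 0 < d := Nat.pos_of_dvd_of_pos hdn hn1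
      refine ⟨⟨hd0, le_trans (Nat.le_of_dvd hn1 hdn) hnN⟩,
        Nat.one_le_div_iff hd0 |>.mpr (Nat.le_of_dvd hn1 hdn), Nat.div_le_div_right hnN⟩
    · rintro ⟨d, m⟩ hp
      simp only [Finset.mem_sigma, Finset.mem_Icc] at hp
      have hd0 : 0 < d := hp.1.1
      simp [Nat.mul_div_cancel_left _ hd0]
    · rintro ⟨n, d⟩ hp
      simp only [Finset.mem_sigma, Finset.mem_Icc, Nat.mem_divisors] at hp
      simp [Nat.mul_div_cancel' hp.2.1]
    · rintro ⟨d, m⟩ hp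
      simp only [Finset.mem_sigma, Finset.mem_Icc] at hp
      push_cast
      rfl
  have step3 : ∑ p ∈ (Finset.Icc 1 N).sigma (fun n => n.divisors),
        (moebius p.2 : ℝ) / p.1 = 1 := by
    rw [Finset.sum_sigma]
    have : ∀ n ∈ Finset.Icc 1 N, ∑ d ∈ n.divisors, (moebius d : ℝ) / n
        = if n = 1 then 1 else 0 := by
      intro n hn
      rw [← Finset.sum_div, sum_divisors_moebius_real]
      simp only [Finset.mem_Icc] at hn
      split_ifs with h
      · simp [h]
      · simp
    rw [Finset.sum_congr rfl this, Finset.sum_ite_eq' (Finset.Icc 1 N) 1 (fun _ => (1 : ℝ))]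
    simp [hN]
  rw [step1, step2, step3]

lemma Icc_split (a b : ℕ) (h : a ≤ b) :
    Finset.Icc 1 b = Finset.Icc 1 a ∪ Finset.Ioc a b := by
  ext n; simp only [Finset.mem_Icc, Finset.mem_union, Finset.mem_Ioc]; omega

lemma Icc_Ioc_disj (a b : ℕ) : Disjoint (Finset.Icc 1 a) (Finset.Ioc a b) := by
  rw [Finset.disjoint_left]
  intro n hn hn'
  simp only [Finset.mem_Icc] at hn
  simp only [Finset.mem_Ioc] at hn'
  omega

theorem stmt_12 (x : ℕ) (hx : 0 < x) :
    mSum (x ^ 2) = 2 * mSum x -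
      ∑ i ∈ Finset.Icc 1 x, ∑ j ∈ Finset.Icc 1 x,
        ((moebius i : ℝ) * (moebius j : ℝ) / ((i : ℝ) * (j : ℝ))) *
          harmonicNum (x ^ 2 / (i * j)) := by
  have hx2 : 1 ≤ x ^ 2 := Nat.one_le_pow _ _ hx
  -- inner application of lemA for i ≤ x
  have key1 : ∀ i ∈ Finset.Icc 1 x,
      ∑ j ∈ Finset.Icc 1 (x ^ 2 / i), (moebius j : ℝ) / j * harmonicNum (x ^ 2 / (i * j)) = 1 := by
    intro i hi
    simp only [Finset.mem_Icc] at hi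
    have hi0 : 0 < i := hi.1
    have hiN : i ≤ x ^ 2 := le_trans hi.2 (Nat.le_self_pow two_ne_zero x)
    have h1 : 1 ≤ x ^ 2 / i := (Nat.one_le_div_iff hi0).mpr hiN
    have := lemA (x ^ 2 / i) h1
    rw [← this]
    refine Finset.sum_congr rfl fun j hj => ?_
    rw [Nat.div_div_eq_div_mul]
  -- mSum x expressed as a double sum
  have main1 : mSum x = ∑ i ∈ Finset.Icc 1 x, ∑ j ∈ Finset.Icc 1 (x ^ 2 / i),
      (moebius i : ℝ) / i * ((moebius j : ℝ) / j * harmonicNum (x ^ 2 / (i * j))) := by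
    rw [mSum]
    refine Finset.sum_congr rfl fun i hi => ?_
    rw [← Finset.mul_sum, key1 i hi, mul_one]
  -- split inner range
  have hsplit : ∀ i ∈ Finset.Icc 1 x,
      Finset.Icc 1 (x ^ 2 / i) = Finset.Icc 1 x ∪ Finset.Ioc x (x ^ 2 / i) := by
    intro i hi
    simp only [Finset.mem_Icc] at hi
    have hxi : x ≤ x ^ 2 / i := by
      rw [Nat.le_div_iff_mul_le hi.1]
      calc x * i ≤ x * x := Nat.mul_le_mul_left x hi.2
        _ = x ^ 2 := (sq x).symm
    exact Icc_split x (x ^ 2 / i) hxi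
  have main2 : mSum x = (∑ i ∈ Finset.Icc 1 x, ∑ j ∈ Finset.Icc 1 x,
        (moebius i : ℝ) / i * ((moebius j : ℝ) / j * harmonicNum (x ^ 2 / (i * j))))
      + ∑ i ∈ Finset.Icc 1 x, ∑ j ∈ Finset.Ioc x (x ^ 2 / i),
        (moebius i : ℝ) / i * ((moebius j : ℝ) / j * harmonicNum (x ^ 2 / (i * j))) := by
    rw [main1, ← Finset.sum_add_distrib]
    refine Finset.sum_congr rfl fun i hi => ?_
    rw [hsplit i hi, Finset.sum_union]
    exact Icc_Ioc_disj _ _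
  -- swap the order in the tail sum
  have hswap : ∑ i ∈ Finset.Icc 1 x, ∑ j ∈ Finset.Ioc x (x ^ 2 / i),
        (moebius i : ℝ) / i * ((moebius j : ℝ) / j * harmonicNum (x ^ 2 / (i * j)))
      = ∑ j ∈ Finset.Ioc x (x ^ 2), ∑ i ∈ Finset.Icc 1 (x ^ 2 / j),
        (moebius i : ℝ) / i * ((moebius j : ℝ) / j * harmonicNum (x ^ 2 / (i * j))) := by
    refine Finset.sum_comm' ?_
    intro i j
    simp only [Finset.mem_Icc, Finset.mem_Ioc]
    constructor
    · rintro ⟨⟨h1, h2⟩, h3, h4⟩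
      have hij : j * i ≤ x ^ 2 := (Nat.le_div_iff_mul_le h1).mp h4
      have hj0 : 0 < j := lt_of_le_of_lt hx.le h3 |>.trans_le le_rfl
      exact ⟨⟨h1, (Nat.le_div_iff_mul_le hj0).mpr (by rw [mul_comm]; exact hij)⟩, h3,
        le_trans h4 (Nat.div_le_self _ _)⟩
    · rintro ⟨⟨h1, h2⟩, h3, h4⟩
      have hj0 : 0 < j := lt_of_le_of_lt hx.le h3 |>.trans_le le_rfl
      have hij : i * j ≤ x ^ 2 := (Nat.le_div_iff_mul_le hj0).mp h2
      have hix : i ≤ x := by nlinarith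
      exact ⟨⟨h1, hix⟩, h3, (Nat.le_div_iff_mul_le h1).mpr (by rw [mul_comm]; exact hij)⟩
  -- evaluate the tail
  have tail : ∑ j ∈ Finset.Ioc x (x ^ 2), ∑ i ∈ Finset.Icc 1 (x ^ 2 / j),
        (moebius i : ℝ) / i * ((moebius j : ℝ) / j * harmonicNum (x ^ 2 / (i * j)))
      = mSum (x ^ 2) - mSum x := by
    have hval : ∀ j ∈ Finset.Ioc x (x ^ 2), ∑ i ∈ Finset.Icc 1 (x ^ 2 / j),
        (moebius i : ℝ) / i * ((moebius j : ℝ) / j * harmonicNum (x ^ 2 / (i * j)))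
        = (moebius j : ℝ) / j := by
      intro j hj
      simp only [Finset.mem_Ioc] at hj
      have hj0 : 0 < j := lt_of_le_of_lt hx.le hj.1
      have h1 : 1 ≤ x ^ 2 / j := (Nat.one_le_div_iff hj0).mpr hj.2
      have := lemA (x ^ 2 / j) h1
      calc ∑ i ∈ Finset.Icc 1 (x ^ 2 / j),
            (moebius i : ℝ) / i * ((moebius j : ℝ) / j * harmonicNum (x ^ 2 / (i * j)))
          = (moebius j : ℝ) / j * ∑ i ∈ Finset.Icc 1 (x ^ 2 / j),
              (moebius i : ℝ) / i * harmonicNum (x ^ 2 / j / i) := by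
            rw [Finset.mul_sum]
            refine Finset.sum_congr rfl fun i hi => ?_
            rw [Nat.div_div_eq_div_mul, mul_comm j i]
            ring
        _ = (moebius j : ℝ) / j := by rw [this, mul_one]
    rw [Finset.sum_congr rfl hval]
    have : Finset.Icc 1 (x ^ 2) = Finset.Icc 1 x ∪ Finset.Ioc x (x ^ 2) :=
      Icc_split x (x ^ 2) (Nat.le_self_pow two_ne_zero x)
    rw [mSum, mSum, this, Finset.sum_union (Icc_Ioc_disj _ _)]
    ring
  -- identify the double sum in the goal
  have hT : ∑ i ∈ Finset.Icc 1 x, ∑ j ∈ Finset.Icc 1 x,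
        ((moebius i : ℝ) * (moebius j : ℝ) / ((i : ℝ) * (j : ℝ))) *
          harmonicNum (x ^ 2 / (i * j))
      = ∑ i ∈ Finset.Icc 1 x, ∑ j ∈ Finset.Icc 1 x,
        (moebius i : ℝ) / i * ((moebius j : ℝ) / j * harmonicNum (x ^ 2 / (i * j))) := by
    refine Finset.sum_congr rfl fun i _ => Finset.sum_congr rfl fun j _ => by ring
  rw [hT]
  rw [hswap, tail] at main2
  linarith
end

section
/- For every positive integer x, M(x²) = 2·M(x) − ∑_{i=1}^{x} ∑_{j=1}^{x} μ(i)·μ(j)·⌊x²/(i·j)⌋, where M(n) = ∑_{k=1}^{n} μ(k) is the Mertens function. -/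
open Finset ArithmeticFunction

lemma sum_moebius_div (n : ℕ) : ∑ d ∈ n.divisors, (moebius d : ℤ) = if n = 1 then 1 else 0 := by
  rw [← coe_mul_zeta_apply, moebius_mul_coe_zeta, one_apply]

/-- Key lemma: `∑_{d ≤ y} μ(d) ⌊y/d⌋ = 1` for `y ≥ 1`. -/
lemma key_s13 (y : ℕ) (hy : 1 ≤ y) :
    ∑ d ∈ Finset.Icc 1 y, (moebius d : ℤ) * ((y / d : ℕ) : ℤ) = 1 := by
  have hI : Finset.Icc 1 y = Finset.Ioc 0 y := by ext a; simp [Nat.lt_iff_add_one_le]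
  have hcard : ∀ d ∈ Finset.Icc 1 y,
      (moebius d : ℤ) * ((y / d : ℕ) : ℤ)
        = ∑ m ∈ Finset.Icc 1 y, if d ∣ m then (moebius d : ℤ) else 0 := by
    intro d hd
    rw [← Finset.sum_filter, Finset.sum_const]
    have : ((Finset.Icc 1 y).filter (d ∣ ·)).card = y / d := by
      rw [hI, Nat.Ioc_filter_dvd_card_eq_div]
    rw [this, nsmul_eq_mul]
    push_cast
    ring
  rw [Finset.sum_congr rfl hcard, Finset.sum_comm]
  have hinner : ∀ m ∈ Finset.Icc 1 y,
      (∑ d ∈ Finset.Icc 1 y, if d ∣ m then (moebius d : ℤ) else 0)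
        = if m = 1 then 1 else 0 := by
    intro m hm
    simp only [Finset.mem_Icc] at hm
    rw [← sum_moebius_div m, ← Finset.sum_filter]
    apply Finset.sum_congr _ (fun _ _ => rfl)
    ext d
    simp only [Finset.mem_filter, Finset.mem_Icc, Nat.mem_divisors]
    constructor
    · rintro ⟨_, hd⟩; exact ⟨hd, by omega⟩
    · rintro ⟨hd, _⟩
      have h1 : 1 ≤ d := Nat.pos_of_dvd_of_pos hd (by omega)
      have h2 : d ≤ m := Nat.le_of_dvd (by omega) hd
      exact ⟨⟨h1, by omega⟩, hd⟩
  rw [Finset.sum_congr rfl hinner]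
  simp [Finset.sum_ite_eq', hy]

theorem stmt_13 (x : ℕ) (hx : 0 < x) :
    mertens (x ^ 2) = 2 * mertens x -
      ∑ i ∈ Finset.Icc 1 x, ∑ j ∈ Finset.Icc 1 x,
        (moebius i : ℤ) * (moebius j : ℤ) * ((x ^ 2 / (i * j) : ℕ) : ℤ) := by
  set N := x ^ 2 with hN
  clear_value N
  have hxN : x ≤ N := by rw [hN]; nlinarith
  have hN1 : 1 ≤ N := by rw [hN]; nlinarith
  set f : ℕ → ℕ → ℤ := fun i j => (moebius i : ℤ) * (moebius j : ℤ) * ((N / (i * j) : ℕ) : ℤ)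
    with hf
  have hfiltx : (Finset.Icc 1 N).filter (· ≤ x) = Finset.Icc 1 x := by
    ext i; simp only [Finset.mem_filter, Finset.mem_Icc]; omega
  have hinner : ∀ i, 1 ≤ i → i ≤ N →
      ∑ j ∈ Finset.Icc 1 (N / i), (moebius j : ℤ) * ((N / (i * j) : ℕ) : ℤ) = 1 := by
    intro i hi1 hiN
    have h1 : 1 ≤ N / i := (Nat.one_le_div_iff (by omega)).2 hiN
    rw [← key_s13 (N / i) h1]
    apply Finset.sum_congr rfl
    intro j _
    rw [Nat.div_div_eq_div_mul]
  have hfilter : ∀ i, 1 ≤ i →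
      (Finset.Icc 1 N).filter (fun j => i * j ≤ N) = Finset.Icc 1 (N / i) := by
    intro i hi
    ext j
    simp only [Finset.mem_filter, Finset.mem_Icc, Nat.le_div_iff_mul_le (by omega : 0 < i)]
    constructor
    · rintro ⟨⟨h1, _⟩, h2⟩; exact ⟨h1, by rwa [mul_comm]⟩
    · rintro ⟨h1, h2⟩
      rw [mul_comm] at h2
      have : j ≤ N := le_trans (Nat.le_mul_of_pos_left j (by omega)) h2
      exact ⟨⟨h1, this⟩, h2⟩
  have hcond : ∀ i, 1 ≤ i → i ≤ N →
      ∑ j ∈ Finset.Icc 1 N, (if i * j ≤ N then f i j else 0)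
        = (moebius i : ℤ) := by
    intro i hi1 hiN
    rw [← Finset.sum_filter, hfilter i hi1]
    have : ∑ j ∈ Finset.Icc 1 (N / i), f i j
        = (moebius i : ℤ) * ∑ j ∈ Finset.Icc 1 (N / i),
            (moebius j : ℤ) * ((N / (i * j) : ℕ) : ℤ) := by
      rw [Finset.mul_sum]; apply Finset.sum_congr rfl; intro j _; rw [hf]; ring
    rw [this, hinner i hi1 hiN, mul_one]
  -- Step 1: M(N) equals the sum over the full hyperbolic region
  have step1 : mertens N = ∑ i ∈ Finset.Icc 1 N, ∑ j ∈ Finset.Icc 1 N,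
      (if i * j ≤ N then f i j else 0) := by
    unfold mertens
    apply Finset.sum_congr rfl
    intro i hi
    simp only [Finset.mem_Icc] at hi
    rw [hcond i hi.1 hi.2]
  have hsymm : ∀ i j, f i j = f j i := by
    intro i j; rw [hf]; simp only; rw [mul_comm i j]; ring
  -- pointwise hyperbola decomposition
  have hpoint : ∀ i ∈ Finset.Icc 1 N, ∀ j ∈ Finset.Icc 1 N,
      (if i * j ≤ N then f i j else 0)
        = (if i ≤ x ∧ i * j ≤ N then f i j else 0)
          + (if j ≤ x ∧ i * j ≤ N then f i j else 0)
          - (if (i ≤ x ∧ j ≤ x) then f i j else 0) := by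
    intro i hi j hj
    simp only [Finset.mem_Icc] at hi hj
    have hand : (i ≤ x ∧ j ≤ x) → i * j ≤ N := fun ⟨h1, h2⟩ => by
      rw [hN, pow_two]; exact Nat.mul_le_mul h1 h2
    by_cases hij : i * j ≤ N
    · have hor : i ≤ x ∨ j ≤ x := by
        by_contra h
        push_neg at h
        have hlt : x * x < i * j :=
          calc x * x < i * x := Nat.mul_lt_mul_of_lt_of_le h.1 le_rfl (by omega)
            _ ≤ i * j := Nat.mul_le_mul_left i (by omega)
        rw [hN, pow_two] at hij; omega
      by_cases h1 : i ≤ x <;> by_cases h2 : j ≤ x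
      · simp only [hij, h1, h2, and_self, and_true, true_and, if_true]; ring
      · simp only [hij, h1, h2, and_true, true_and, and_false, if_true, if_false]; ring
      · simp only [hij, h1, h2, and_true, true_and, false_and, if_true, if_false]; ring
      · omega
    · have : ¬ (i ≤ x ∧ j ≤ x) := fun h => hij (hand h)
      simp [hij, this]
  have term1 : ∑ i ∈ Finset.Icc 1 N, ∑ j ∈ Finset.Icc 1 N,
      (if i ≤ x ∧ i * j ≤ N then f i j else 0) = mertens x := by
    have h : ∀ i ∈ Finset.Icc 1 N, ∑ j ∈ Finset.Icc 1 N,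
        (if i ≤ x ∧ i * j ≤ N then f i j else 0)
          = if i ≤ x then (moebius i : ℤ) else 0 := by
      intro i hi
      simp only [Finset.mem_Icc] at hi
      by_cases hix : i ≤ x
      · simp only [hix, true_and, if_true]
        exact hcond i hi.1 hi.2
      · simp [hix]
    rw [Finset.sum_congr rfl h, ← Finset.sum_filter, hfiltx]
    rfl
  have term2 : ∑ i ∈ Finset.Icc 1 N, ∑ j ∈ Finset.Icc 1 N,
      (if j ≤ x ∧ i * j ≤ N then f i j else 0) = mertens x := by
    rw [Finset.sum_comm, ← term1]
    apply Finset.sum_congr rfl; intro i _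
    apply Finset.sum_congr rfl; intro j _
    rw [hsymm j i, mul_comm j i]
  have term3 : ∑ i ∈ Finset.Icc 1 N, ∑ j ∈ Finset.Icc 1 N,
      (if (i ≤ x ∧ j ≤ x) then f i j else 0)
        = ∑ i ∈ Finset.Icc 1 x, ∑ j ∈ Finset.Icc 1 x, f i j := by
    have h : ∀ i ∈ Finset.Icc 1 N, ∑ j ∈ Finset.Icc 1 N,
        (if (i ≤ x ∧ j ≤ x) then f i j else 0)
          = if i ≤ x then ∑ j ∈ Finset.Icc 1 x, f i j else 0 := by
      intro i _
      by_cases hix : i ≤ x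
      · simp only [hix, true_and, if_true]
        rw [← Finset.sum_filter, hfiltx]
      · simp [hix]
    rw [Finset.sum_congr rfl h, ← Finset.sum_filter, hfiltx]
  calc mertens N
      = ∑ i ∈ Finset.Icc 1 N, ∑ j ∈ Finset.Icc 1 N,
          ((if i ≤ x ∧ i * j ≤ N then f i j else 0)
            + (if j ≤ x ∧ i * j ≤ N then f i j else 0)
            - (if (i ≤ x ∧ j ≤ x) then f i j else 0)) := by
        rw [step1]
        exact Finset.sum_congr rfl fun i hi =>
          Finset.sum_congr rfl fun j hj => hpoint i hi j hj
    _ = (∑ i ∈ Finset.Icc 1 N, ∑ j ∈ Finset.Icc 1 N, (if i ≤ x ∧ i * j ≤ N then f i j else 0))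
          + (∑ i ∈ Finset.Icc 1 N, ∑ j ∈ Finset.Icc 1 N, (if j ≤ x ∧ i * j ≤ N then f i j else 0))
          - (∑ i ∈ Finset.Icc 1 N, ∑ j ∈ Finset.Icc 1 N, (if (i ≤ x ∧ j ≤ x) then f i j else 0)) := by
        simp [Finset.sum_sub_distrib, Finset.sum_add_distrib]
    _ = mertens x + mertens x - ∑ i ∈ Finset.Icc 1 x, ∑ j ∈ Finset.Icc 1 x, f i j := by
        rw [term1, term2, term3]
    _ = 2 * mertens x - ∑ i ∈ Finset.Icc 1 x, ∑ j ∈ Finset.Icc 1 x, f i j := by ring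
end

section
/- For every positive integer x, M(x²) = 2·M(x) − x²·(m_x)² + ∑_{i=1}^{x} ∑_{j=1}^{x} μ(i)·μ(j)·{x²/(i·j)}, where M(n) = ∑_{k=1}^{n} μ(k) is the Mertens function, m_n = ∑_{k=1}^{n} μ(k)/k, and {t} = t − ⌊t⌋ denotes the fractional part of t. -/
open Finset ArithmeticFunction

/-- Dirichlet-style sum swap: summing a divisor-sum up to `N` equals weighting by `N / n`. -/
lemma swap_div (N : ℕ) (g : ℕ → ℤ) :
    ∑ m ∈ Icc 1 N, ∑ d ∈ m.divisors, g d = ∑ n ∈ Icc 1 N, g n * ((N / n : ℕ) : ℤ) := by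
  have h : ∀ n : ℕ, g n * ((N / n : ℕ) : ℤ) = ∑ _k ∈ Icc 1 (N / n), g n := by
    intro n
    rw [Finset.sum_const, Nat.card_Icc, Nat.add_sub_cancel, nsmul_eq_mul, mul_comm]
  simp_rw [h]
  rw [Finset.sum_sigma' (Icc 1 N) (fun m => m.divisors) (fun _ d => g d),
      Finset.sum_sigma' (Icc 1 N) (fun n => Icc 1 (N / n)) (fun n _ => g n)]
  refine Finset.sum_nbij' (fun p => ⟨p.2, p.1 / p.2⟩) (fun p => ⟨p.1 * p.2, p.1⟩) ?_ ?_ ?_ ?_ ?_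
  · rintro ⟨m, d⟩ hp
    simp only [Finset.mem_sigma, Finset.mem_Icc, Nat.mem_divisors] at hp ⊢
    obtain ⟨⟨hm1, hmN⟩, hdvd, hm0⟩ := hp
    have hd0 : 0 < d := Nat.pos_of_dvd_of_pos hdvd (by omega)
    have hdm : d ≤ m := Nat.le_of_dvd (by omega) hdvd
    exact ⟨⟨hd0, hdm.trans hmN⟩, (Nat.one_le_div_iff hd0).mpr hdm, Nat.div_le_div_right hmN⟩
  · rintro ⟨n, k⟩ hp
    simp only [Finset.mem_sigma, Finset.mem_Icc, Nat.mem_divisors] at hp ⊢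
    obtain ⟨⟨hn1, hnN⟩, hk1, hk2⟩ := hp
    have hn0 : 0 < n := hn1
    have hnk : n * k ≤ N := by
      have := (Nat.le_div_iff_mul_le hn0).mp hk2
      rwa [mul_comm]
    have hpos : 0 < n * k := Nat.mul_pos hn1 hk1
    exact ⟨⟨hpos, hnk⟩, dvd_mul_right n k, hpos.ne'⟩
  · rintro ⟨m, d⟩ hp
    simp only [Finset.mem_sigma, Finset.mem_Icc, Nat.mem_divisors] at hp
    obtain ⟨⟨hm1, hmN⟩, hdvd, hm0⟩ := hp
    simp [Nat.mul_div_cancel' hdvd]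
  · rintro ⟨n, k⟩ hp
    simp only [Finset.mem_sigma, Finset.mem_Icc] at hp
    obtain ⟨⟨hn1, hnN⟩, hk1, hk2⟩ := hp
    simp [Nat.mul_div_cancel_left k hn1]
  · rintro ⟨m, d⟩ _
    rfl

/-- The classical identity `∑_{j ≤ M} μ(j) ⌊M/j⌋ = 1` for `M ≥ 1`. -/
lemma sum_moebius_div_s14 (M : ℕ) (hM : 1 ≤ M) :
    ∑ j ∈ Icc 1 M, (moebius j : ℤ) * ((M / j : ℕ) : ℤ) = 1 := by
  rw [← swap_div]
  have h : ∀ m ∈ Icc 1 M, ∑ d ∈ m.divisors, (moebius d : ℤ) = if m = 1 then 1 else 0 := by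
    intro m _
    have h2 : (moebius * (zeta : ArithmeticFunction ℤ) : ArithmeticFunction ℤ) m = (1 : ArithmeticFunction ℤ) m := by
      rw [moebius_mul_coe_zeta]
    rwa [coe_mul_zeta_apply, one_apply] at h2
  rw [Finset.sum_congr rfl h, Finset.sum_ite_eq' (Icc 1 M) 1 (fun _ => (1 : ℤ))]
  simp [hM]


/-- Hyperbola-method identity: `M(x²) = 2M(x) - ∑∑ μ(i)μ(j)⌊x²/(ij)⌋`. -/
lemma mertens_sq_eq (x : ℕ) (hx : 0 < x) :
    mertens (x ^ 2) = 2 * mertens x -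
      ∑ i ∈ Icc 1 x, ∑ j ∈ Icc 1 x,
        (moebius i : ℤ) * (moebius j : ℤ) * ((x ^ 2 / (i * j) : ℕ) : ℤ) := by
  obtain ⟨N, hNdef⟩ : ∃ N, x ^ 2 = N := ⟨x ^ 2, rfl⟩
  rw [hNdef]
  have hxx : x * x = N := by rw [← hNdef, sq]
  have hxN : x ≤ N := by
    rw [← hNdef]; exact Nat.le_self_pow two_ne_zero x
  have hN1 : 1 ≤ N := hx.trans_le hxN
  set F : ℕ × ℕ → ℤ := fun p => (moebius p.1 : ℤ) * moebius p.2 * ((N / (p.1 * p.2) : ℕ) : ℤ)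
    with hF
  set P : Finset (ℕ × ℕ) := (Icc 1 N ×ˢ Icc 1 N).filter (fun p : ℕ × ℕ => p.1 * p.2 ≤ N)
    with hP
  have memP : ∀ p : ℕ × ℕ, p ∈ P ↔
      (1 ≤ p.1 ∧ p.1 ≤ N) ∧ (1 ≤ p.2 ∧ p.2 ≤ N) ∧ p.1 * p.2 ≤ N := by
    intro p
    simp [hP, Finset.mem_filter, Finset.mem_product, Finset.mem_Icc, and_assoc]
  -- Step 1: M(N) = ∑_{p ∈ P} μ(p₁) μ(p₂) ⌊N/(p₁p₂)⌋
  have key : ((zeta : ArithmeticFunction ℕ) * (moebius * moebius) : ArithmeticFunction ℤ)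
      = moebius := by
    rw [← mul_assoc, coe_zeta_mul_moebius, one_mul]
  have h1 : mertens N
      = ∑ n ∈ Icc 1 N, ((moebius * moebius : ArithmeticFunction ℤ) n) * ((N / n : ℕ) : ℤ) := by
    rw [← swap_div]
    unfold mertens
    refine Finset.sum_congr rfl fun m _ => ?_
    conv_rhs => rw [← coe_zeta_mul_apply]
    rw [key]
  have h2 : mertens N = ∑ n ∈ Icc 1 N, ∑ p ∈ n.divisorsAntidiagonal,
      (moebius p.1 : ℤ) * moebius p.2 * ((N / n : ℕ) : ℤ) := by
    rw [h1]
    refine Finset.sum_congr rfl fun n _ => ?_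
    rw [mul_apply, Finset.sum_mul]
  have h3 : mertens N = ∑ p ∈ P, F p := by
    rw [h2, Finset.sum_sigma' (Icc 1 N) (fun n => n.divisorsAntidiagonal)
      (fun n p => (moebius p.1 : ℤ) * moebius p.2 * ((N / n : ℕ) : ℤ))]
    refine Finset.sum_nbij' (fun q => q.2) (fun p => ⟨p.1 * p.2, p⟩) ?_ ?_ ?_ ?_ ?_
    · rintro ⟨n, i, j⟩ hq
      simp only [Finset.mem_sigma, Finset.mem_Icc, Nat.mem_divisorsAntidiagonal] at hq
      obtain ⟨⟨hn1, hnN⟩, hij, hn0⟩ := hq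
      subst hij
      have hi0 : 0 < i := Nat.pos_of_ne_zero (by rintro rfl; simp at hn1)
      have hj0 : 0 < j := Nat.pos_of_ne_zero (by rintro rfl; simp at hn1)
      dsimp only
      rw [memP]
      exact ⟨⟨hi0, (Nat.le_mul_of_pos_right i hj0).trans hnN⟩,
        ⟨hj0, (Nat.le_mul_of_pos_left j hi0).trans hnN⟩, hnN⟩
    · rintro p hp
      rw [memP] at hp
      obtain ⟨⟨h11, _⟩, ⟨h21, _⟩, hle⟩ := hp
      refine Finset.mem_sigma.mpr ⟨?_, ?_⟩
      · rw [Finset.mem_Icc]; exact ⟨Nat.mul_pos h11 h21, hle⟩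
      · rw [Nat.mem_divisorsAntidiagonal]; exact ⟨rfl, (Nat.mul_pos h11 h21).ne'⟩
    · rintro ⟨n, i, j⟩ hq
      simp only [Finset.mem_sigma, Nat.mem_divisorsAntidiagonal] at hq
      obtain ⟨-, hij, -⟩ := hq
      subst hij
      rfl
    · rintro p _
      rfl
    · rintro ⟨n, i, j⟩ hq
      simp only [Finset.mem_sigma, Nat.mem_divisorsAntidiagonal] at hq
      obtain ⟨-, hij, -⟩ := hq
      subst hij
      rfl
  -- Step 2: hyperbola split
  have cover : P.filter (fun p => p.1 ≤ x) ∪ P.filter (fun p => p.2 ≤ x) = P := by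
    rw [← Finset.filter_or]
    apply Finset.filter_true_of_mem
    intro p hp
    rw [memP] at hp
    by_contra hcon
    push_neg at hcon
    obtain ⟨hc1, hc2⟩ := hcon
    have h1 : x + 1 ≤ p.1 := hc1
    have h2 : x + 1 ≤ p.2 := hc2
    have h3 := Nat.mul_le_mul h1 h2
    have hle : p.1 * p.2 ≤ N := hp.2.2
    nlinarith
  have inter : P.filter (fun p => p.1 ≤ x) ∩ P.filter (fun p => p.2 ≤ x)
      = Icc 1 x ×ˢ Icc 1 x := by
    rw [← Finset.filter_and]
    ext p
    simp only [Finset.mem_filter, Finset.mem_product, Finset.mem_Icc, memP]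
    constructor
    · rintro ⟨⟨⟨h11, -⟩, ⟨h21, -⟩, -⟩, hx1, hx2⟩
      exact ⟨⟨h11, hx1⟩, h21, hx2⟩
    · rintro ⟨⟨h11, h12⟩, h21, h22⟩
      have hmul : p.1 * p.2 ≤ N := le_of_le_of_eq (Nat.mul_le_mul h12 h22) hxx
      exact ⟨⟨⟨h11, h12.trans hxN⟩, ⟨h21, h22.trans hxN⟩, hmul⟩, h12, h22⟩
  have hsplit : ∑ p ∈ P, F p
      = (∑ p ∈ P.filter (fun p => p.1 ≤ x), F p)
        + (∑ p ∈ P.filter (fun p => p.2 ≤ x), F p)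
        - ∑ p ∈ Icc 1 x ×ˢ Icc 1 x, F p := by
    have h := Finset.sum_union_inter (s₁ := P.filter (fun p => p.1 ≤ x))
      (s₂ := P.filter (fun p => p.2 ≤ x)) (f := F)
    rw [cover, inter] at h
    linarith
  -- Step 3: each one-sided sum equals M(x)
  have hA : ∑ p ∈ P.filter (fun p => p.1 ≤ x), F p = mertens x := by
    have hre : ∑ i ∈ Icc 1 x, ∑ j ∈ Icc 1 (N / i),
        (moebius i : ℤ) * ((moebius j : ℤ) * ((N / i / j : ℕ) : ℤ))
        = ∑ p ∈ P.filter (fun p => p.1 ≤ x), F p := by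
      rw [Finset.sum_sigma' (Icc 1 x) (fun i => Icc 1 (N / i))
        (fun i j => (moebius i : ℤ) * ((moebius j : ℤ) * ((N / i / j : ℕ) : ℤ)))]
      refine Finset.sum_nbij' (fun q => (q.1, q.2)) (fun p => ⟨p.1, p.2⟩) ?_ ?_ ?_ ?_ ?_
      · rintro ⟨i, j⟩ hq
        simp only [Finset.mem_sigma, Finset.mem_Icc] at hq
        obtain ⟨⟨hi1, hix⟩, hj1, hj2⟩ := hq
        simp only [Finset.mem_filter, memP]
        refine ⟨⟨⟨hi1, hix.trans hxN⟩, ⟨hj1, hj2.trans (Nat.div_le_self N i)⟩, ?_⟩, hix⟩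
        have hji := (Nat.le_div_iff_mul_le hi1).mp hj2
        calc i * j = j * i := mul_comm i j
          _ ≤ N := hji
      · rintro ⟨i, j⟩ hp
        simp only [Finset.mem_filter, memP] at hp
        obtain ⟨⟨⟨hi1, -⟩, ⟨hj1, -⟩, hle⟩, hix⟩ := hp
        simp only [Finset.mem_sigma, Finset.mem_Icc]
        refine ⟨⟨hi1, hix⟩, hj1, (Nat.le_div_iff_mul_le hi1).mpr ?_⟩
        calc j * i = i * j := mul_comm j i
          _ ≤ N := hle
      · rintro ⟨i, j⟩ _; rfl
      · rintro p _; rfl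
      · rintro ⟨i, j⟩ _
        simp only [hF, Nat.div_div_eq_div_mul]
        ring
    rw [← hre]
    unfold mertens
    refine Finset.sum_congr rfl fun i hi => ?_
    rw [← Finset.mul_sum]
    rw [Finset.mem_Icc] at hi
    have hi1 : 0 < i := hi.1
    have hMi : 1 ≤ N / i := (Nat.one_le_div_iff hi1).mpr (hi.2.trans hxN)
    rw [sum_moebius_div_s14 (N / i) hMi, mul_one]
  have hB : ∑ p ∈ P.filter (fun p => p.2 ≤ x), F p
      = ∑ p ∈ P.filter (fun p => p.1 ≤ x), F p := by
    refine Finset.sum_nbij' Prod.swap Prod.swap ?_ ?_ ?_ ?_ ?_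
    · rintro ⟨i, j⟩ hp
      simp only [Finset.mem_filter, memP, Prod.fst_swap, Prod.snd_swap] at hp ⊢
      obtain ⟨⟨hi, hj, hle⟩, hjx⟩ := hp
      refine ⟨⟨hj, hi, ?_⟩, hjx⟩
      calc j * i = i * j := mul_comm j i
        _ ≤ N := hle
    · rintro ⟨i, j⟩ hp
      simp only [Finset.mem_filter, memP, Prod.fst_swap, Prod.snd_swap] at hp ⊢
      obtain ⟨⟨hi, hj, hle⟩, hix⟩ := hp
      refine ⟨⟨hj, hi, ?_⟩, hix⟩
      calc j * i = i * j := mul_comm j i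
        _ ≤ N := hle
    · rintro ⟨i, j⟩ _; rfl
    · rintro ⟨i, j⟩ _; rfl
    · rintro ⟨i, j⟩ _
      simp only [hF, Prod.swap_prod_mk]
      rw [mul_comm i j]
      ring
  -- Step 4: assemble
  have hC : ∑ p ∈ Icc 1 x ×ˢ Icc 1 x, F p
      = ∑ i ∈ Icc 1 x, ∑ j ∈ Icc 1 x,
          (moebius i : ℤ) * (moebius j : ℤ) * ((N / (i * j) : ℕ) : ℤ) := by
    rw [Finset.sum_product]
  rw [h3, hsplit, hA, hB, hA, hC]
  ring

theorem stmt_14 (x : ℕ) (hx : 0 < x) :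
    (mertens (x ^ 2) : ℝ) = 2 * (mertens x : ℝ) - (x : ℝ) ^ 2 * (mSum x) ^ 2 +
      ∑ i ∈ Finset.Icc 1 x, ∑ j ∈ Finset.Icc 1 x,
        (moebius i : ℝ) * (moebius j : ℝ) *
          Int.fract ((x : ℝ) ^ 2 / ((i : ℝ) * (j : ℝ))) := by
  have hint := mertens_sq_eq x hx
  have hcast : ∀ i ∈ Icc 1 x, ∀ j ∈ Icc 1 x,
      ((x ^ 2 / (i * j) : ℕ) : ℝ)
        = (x : ℝ) ^ 2 / ((i : ℝ) * (j : ℝ)) - Int.fract ((x : ℝ) ^ 2 / ((i : ℝ) * (j : ℝ))) := by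
    intro i hi j hj
    set r : ℝ := (x : ℝ) ^ 2 / ((i : ℝ) * (j : ℝ)) with hr
    have hr0 : 0 ≤ r := by positivity
    have h1 : (x ^ 2 / (i * j) : ℕ) = ⌊r⌋₊ := by
      rw [hr, show ((i : ℝ) * (j : ℝ)) = ((i * j : ℕ) : ℝ) by push_cast; ring,
        show ((x : ℝ) ^ 2) = ((x ^ 2 : ℕ) : ℝ) by push_cast; ring]
      exact (Nat.floor_div_eq_div (K := ℝ) (x ^ 2) (i * j)).symm
    rw [h1, natCast_floor_eq_intCast_floor hr0]
    exact (Int.self_sub_fract r).symm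
  have hm : (x : ℝ) ^ 2 * (mSum x) ^ 2
      = ∑ i ∈ Icc 1 x, ∑ j ∈ Icc 1 x,
          (moebius i : ℝ) * (moebius j : ℝ) * ((x : ℝ) ^ 2 / ((i : ℝ) * (j : ℝ))) := by
    rw [pow_two (mSum x)]
    unfold mSum
    rw [Finset.sum_mul_sum, Finset.mul_sum]
    refine Finset.sum_congr rfl fun i _ => ?_
    rw [Finset.mul_sum]
    refine Finset.sum_congr rfl fun j _ => ?_
    ring
  calc (mertens (x ^ 2) : ℝ)
      = 2 * (mertens x : ℝ) - ∑ i ∈ Icc 1 x, ∑ j ∈ Icc 1 x,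
          (moebius i : ℝ) * (moebius j : ℝ) * ((x ^ 2 / (i * j) : ℕ) : ℝ) := by
        have h0 := congrArg (fun z : ℤ => (z : ℝ)) hint
        push_cast at h0
        exact h0
    _ = 2 * (mertens x : ℝ) - ∑ i ∈ Icc 1 x, ∑ j ∈ Icc 1 x,
          ((moebius i : ℝ) * (moebius j : ℝ) * ((x : ℝ) ^ 2 / ((i : ℝ) * (j : ℝ)))
            - (moebius i : ℝ) * (moebius j : ℝ)
              * Int.fract ((x : ℝ) ^ 2 / ((i : ℝ) * (j : ℝ)))) := by
        congr 1
        refine Finset.sum_congr rfl fun i hi => Finset.sum_congr rfl fun j hj => ?_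
        rw [hcast i hi j hj]
        ring
    _ = 2 * (mertens x : ℝ) - ((x : ℝ) ^ 2 * (mSum x) ^ 2
          - ∑ i ∈ Icc 1 x, ∑ j ∈ Icc 1 x,
              (moebius i : ℝ) * (moebius j : ℝ)
                * Int.fract ((x : ℝ) ^ 2 / ((i : ℝ) * (j : ℝ)))) := by
        simp only [Finset.sum_sub_distrib]
        rw [← hm]
    _ = 2 * (mertens x : ℝ) - (x : ℝ) ^ 2 * (mSum x) ^ 2
          + ∑ i ∈ Icc 1 x, ∑ j ∈ Icc 1 x,
              (moebius i : ℝ) * (moebius j : ℝ)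
                * Int.fract ((x : ℝ) ^ 2 / ((i : ℝ) * (j : ℝ))) := by
        ring
end
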